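/- arXiv:1202.3410 — 3 statements merged into one kernel-verified Lean document; each statement's English description precedes it below -/
import Mathlib

section
/- Let D(η) = e^{η J+} e^{μ J3} e^{-η̄ J-} with μ = log(1 + |η|²), acting in the (N+1)-dimensional su(2) representation. Then its matrix elements in the mode basis are λ_{k,m} = ⟨k| D(η) |m⟩ = (-1)^m (ρ^{m+k} e^{iδ(k-m)} / (1+ρ²)^{N/2}) C(N,k)^{1/2} C(N,m)^{1/2} K_m(k; p, N), where η = ρe^{iδ} and p = ρ²/(1+ρ²). -/
/-- The su(2) spin-N/2 raising operator on `ℂ^{N+1}`. -/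
noncomputable def Jp (N : ℕ) : Matrix (Fin (N + 1)) (Fin (N + 1)) ℂ :=
  Matrix.of fun i j : Fin (N + 1) =>
    if (i : ℕ) = (j : ℕ) + 1 then (Real.sqrt (((j : ℕ) + 1) * (N - (j : ℕ))) : ℂ) else 0

/-- The su(2) spin-N/2 lowering operator on `ℂ^{N+1}`. -/
noncomputable def Jm (N : ℕ) : Matrix (Fin (N + 1)) (Fin (N + 1)) ℂ :=
  Matrix.of fun i j : Fin (N + 1) =>
    if (i : ℕ) + 1 = (j : ℕ) then (Real.sqrt ((j : ℕ) * (N - (j : ℕ) + 1)) : ℂ) else 0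

/-- The su(2) spin-N/2 diagonal generator on `ℂ^{N+1}`. -/
noncomputable def J3 (N : ℕ) : Matrix (Fin (N + 1)) (Fin (N + 1)) ℂ :=
  Matrix.diagonal fun k : Fin (N + 1) => ((k : ℕ) : ℂ) - (N : ℂ) / 2


open Nat in
/-- The Krawtchouk polynomial. -/
noncomputable def kraw (p : ℝ) (N n : ℕ) (x : ℝ) : ℝ :=
  ∑ k ∈ Finset.range (n + 1),
    ((ascPochhammer ℝ k).eval (-(n : ℝ)) * (ascPochhammer ℝ k).eval (-x)) /
      ((ascPochhammer ℝ k).eval (-(N : ℝ)) * (k ! : ℝ)) * (1 / p) ^ k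

open Finset
lemma exp_nilp {n : ℕ} (x : Matrix (Fin n) (Fin n) ℂ) (q : ℕ) (h : x ^ q = 0) :
    NormedSpace.exp x = ∑ i ∈ Finset.range q, (i.factorial⁻¹ : ℂ) • x ^ i := by
  rw [NormedSpace.exp_eq_tsum (𝕂 := ℂ)]
  refine tsum_eq_sum fun b hb => ?_
  have hbn : q ≤ b := by simpa using hb
  have : x ^ b = 0 := by
    calc x ^ b = x ^ q * x ^ (b - q) := by rw [← pow_add]; congr 1; omega
    _ = 0 := by rw [h, zero_mul]
  simp [this]
open Finset

noncomputable def cJp (N q j : ℕ) : ℝ :=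
  ∏ t ∈ Finset.range q, Real.sqrt (((j : ℝ) + t + 1) * ((N : ℝ) - (j + t)))

lemma Jp_pow (N r : ℕ) (i j : Fin (N + 1)) :
    ((Jp N) ^ r) i j = if (i : ℕ) = (j : ℕ) + r then (cJp N r j : ℂ) else 0 := by
  induction r generalizing i j with
  | zero => simp [cJp, Matrix.one_apply, Fin.ext_iff]
  | succ r ih =>
    rw [pow_succ, Matrix.mul_apply]
    by_cases hj : (j : ℕ) < N
    · have hmem : (⟨(j : ℕ) + 1, by omega⟩ : Fin (N + 1)) ∈ Finset.univ := Finset.mem_univ _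
      rw [Finset.sum_eq_single (⟨(j : ℕ) + 1, by omega⟩ : Fin (N + 1))]
      · rw [ih]
        have hJp : Jp N ⟨(j : ℕ) + 1, by omega⟩ j =
            (Real.sqrt (((j : ℕ) + 1) * ((N : ℝ) - (j : ℕ))) : ℂ) := by
          simp [Jp]
        rw [hJp]
        by_cases hij : (i : ℕ) = (j : ℕ) + (r + 1)
        · rw [if_pos (by simp; omega), if_pos hij]
          have : cJp N (r + 1) j =
              cJp N r ((j : ℕ) + 1) * Real.sqrt (((j : ℕ) + 1) * ((N : ℝ) - (j : ℕ))) := by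
            rw [cJp, Finset.prod_range_succ']
            congr 1
            · refine Finset.prod_congr rfl fun t _ => ?_
              congr 1
              push_cast; ring
            · congr 1; push_cast; ring
          rw [this]; push_cast; ring
        · rw [if_neg (by simp; omega), if_neg hij, zero_mul]
      · intro b _ hb
        have : Jp N b j = 0 := by
          rw [Jp, Matrix.of_apply, if_neg]
          intro hc
          exact hb (Fin.ext (by simpa using hc))
        rw [this, mul_zero]
      · intro h; exact absurd hmem h
    · have hjN : (j : ℕ) = N := by omega
      rw [Finset.sum_eq_zero, if_neg (by omega)]
      intro b _
      have : Jp N b j = 0 := by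
        rw [Jp, Matrix.of_apply, if_neg]
        intro hc
        have : (b : ℕ) ≤ N := by omega
        omega
      rw [this, mul_zero]

noncomputable def cJm (N q i : ℕ) : ℝ :=
  ∏ t ∈ Finset.range q, Real.sqrt (((i : ℝ) + t + 1) * ((N : ℝ) - (i + t + 1) + 1))

lemma Jm_pow (N r : ℕ) (i j : Fin (N + 1)) :
    ((Jm N) ^ r) i j = if (i : ℕ) + r = (j : ℕ) then (cJm N r i : ℂ) else 0 := by
  induction r generalizing i j with
  | zero => simp [cJm, Matrix.one_apply, Fin.ext_iff, eq_comm]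
  | succ r ih =>
    rw [pow_succ', Matrix.mul_apply]
    by_cases hi : (i : ℕ) < N
    · have hmem : (⟨(i : ℕ) + 1, by omega⟩ : Fin (N + 1)) ∈ Finset.univ := Finset.mem_univ _
      rw [Finset.sum_eq_single (⟨(i : ℕ) + 1, by omega⟩ : Fin (N + 1))]
      · rw [ih]
        have hJm : Jm N i ⟨(i : ℕ) + 1, by omega⟩ =
            (Real.sqrt (((i : ℕ) + 1) * ((N : ℝ) - ((i : ℕ) + 1) + 1)) : ℂ) := by
          simp [Jm]
          rw [← Complex.ofReal_mul, ← Real.sqrt_mul (by positivity)]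
        rw [hJm]
        by_cases hij : (i : ℕ) + (r + 1) = (j : ℕ)
        · rw [if_pos (by simp; omega), if_pos hij]
          have : cJm N (r + 1) i =
              cJm N r ((i : ℕ) + 1) * Real.sqrt (((i : ℕ) + 1) * ((N : ℝ) - ((i : ℕ) + 1) + 1)) := by
            rw [cJm, Finset.prod_range_succ']
            congr 1
            · refine Finset.prod_congr rfl fun t _ => ?_
              congr 1
              push_cast; ring
            · congr 1; push_cast; ring
          rw [this]; push_cast; ring
        · rw [if_neg (by simp; omega), mul_zero, if_neg hij]
      · intro b _ hb
        have : Jm N i b = 0 := by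
          rw [Jm, Matrix.of_apply, if_neg]
          intro hc
          exact hb (Fin.ext (by simpa using hc.symm))
        rw [this, zero_mul]
      · intro h; exact absurd hmem h
    · have hiN : (i : ℕ) = N := by omega
      rw [Finset.sum_eq_zero, if_neg (by omega)]
      intro b _
      have : Jm N i b = 0 := by
        rw [Jm, Matrix.of_apply, if_neg]
        intro hc
        have : (b : ℕ) ≤ N := by omega
        omega
      rw [this, zero_mul]

lemma Jp_nilpotent (N : ℕ) : (Jp N) ^ (N + 1) = 0 := by
  ext i j
  rw [Jp_pow, if_neg (by omega)]
  rfl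

lemma Jm_nilpotent (N : ℕ) : (Jm N) ^ (N + 1) = 0 := by
  ext i j
  rw [Jm_pow, if_neg (by omega)]
  rfl

lemma expJp_apply (N : ℕ) (a : ℂ) (i j : Fin (N + 1)) :
    NormedSpace.exp (a • Jp N) i j =
      if (j : ℕ) ≤ (i : ℕ) then
        a ^ ((i : ℕ) - j) * ((((i : ℕ) - j).factorial : ℂ))⁻¹ * (cJp N ((i : ℕ) - j) j : ℂ)
      else 0 := by
  have hnil : (a • Jp N) ^ (N + 1) = 0 := by
    rw [smul_pow, Jp_nilpotent, smul_zero]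
  rw [exp_nilp _ _ hnil, Matrix.sum_apply]
  have hterm : ∀ r ∈ Finset.range (N + 1),
      ((r.factorial⁻¹ : ℂ) • (a • Jp N) ^ r) i j =
        if (i : ℕ) = (j : ℕ) + r then
          a ^ r * ((r.factorial : ℂ))⁻¹ * (cJp N r j : ℂ) else 0 := by
    intro r _
    rw [smul_pow, Matrix.smul_apply, Matrix.smul_apply, Jp_pow]
    by_cases h : (i : ℕ) = (j : ℕ) + r
    · rw [if_pos h, if_pos h]; simp [smul_eq_mul]; ring
    · rw [if_neg h, if_neg h]; simp
  rw [Finset.sum_congr rfl hterm]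
  by_cases hji : (j : ℕ) ≤ (i : ℕ)
  · rw [if_pos hji, Finset.sum_eq_single ((i : ℕ) - (j : ℕ))]
    · rw [if_pos (by omega)]
    · intro b _ hb; rw [if_neg (by omega)]
    · intro h; exact absurd (Finset.mem_range.2 (by omega)) h
  · rw [if_neg hji, Finset.sum_eq_zero]
    intro b _; rw [if_neg (by omega)]

lemma expJm_apply (N : ℕ) (a : ℂ) (i j : Fin (N + 1)) :
    NormedSpace.exp (a • Jm N) i j =
      if (i : ℕ) ≤ (j : ℕ) then
        a ^ ((j : ℕ) - i) * ((((j : ℕ) - i).factorial : ℂ))⁻¹ * (cJm N ((j : ℕ) - i) i : ℂ)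
      else 0 := by
  have hnil : (a • Jm N) ^ (N + 1) = 0 := by
    rw [smul_pow, Jm_nilpotent, smul_zero]
  rw [exp_nilp _ _ hnil, Matrix.sum_apply]
  have hterm : ∀ r ∈ Finset.range (N + 1),
      ((r.factorial⁻¹ : ℂ) • (a • Jm N) ^ r) i j =
        if (i : ℕ) + r = (j : ℕ) then
          a ^ r * ((r.factorial : ℂ))⁻¹ * (cJm N r i : ℂ) else 0 := by
    intro r _
    rw [smul_pow, Matrix.smul_apply, Matrix.smul_apply, Jm_pow]
    by_cases h : (i : ℕ) + r = (j : ℕ)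
    · rw [if_pos h, if_pos h]; simp [smul_eq_mul]; ring
    · rw [if_neg h, if_neg h]; simp
  rw [Finset.sum_congr rfl hterm]
  by_cases hji : (i : ℕ) ≤ (j : ℕ)
  · rw [if_pos hji, Finset.sum_eq_single ((j : ℕ) - (i : ℕ))]
    · rw [if_pos (by omega)]
    · intro b _ hb; rw [if_neg (by omega)]
    · intro h; exact absurd (Finset.mem_range.2 (by omega)) h
  · rw [if_neg hji, Finset.sum_eq_zero]
    intro b _; rw [if_neg (by omega)]

lemma expJ3_eq (N : ℕ) (c : ℂ) :
    NormedSpace.exp (c • J3 N) =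
      Matrix.diagonal fun k : Fin (N + 1) => Complex.exp (c * (((k : ℕ) : ℂ) - (N : ℂ) / 2)) := by
  rw [J3, ← Matrix.diagonal_smul, Matrix.exp_diagonal, Pi.exp_def]
  simp only [Pi.smul_apply, smul_eq_mul, Complex.exp_eq_exp_ℂ]

lemma sqrt_prod (q : ℕ) (f : ℕ → ℝ) (hf : ∀ t, 0 ≤ f t) :
    ∏ t ∈ Finset.range q, Real.sqrt (f t) = Real.sqrt (∏ t ∈ Finset.range q, f t) := by
  induction q with
  | zero => simp
  | succ q ih =>
    rw [Finset.prod_range_succ, Finset.prod_range_succ, ih,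
      Real.sqrt_mul (Finset.prod_nonneg fun t _ => hf t)]

lemma prod_shift_desc (j q : ℕ) :
    ∏ t ∈ Finset.range q, (j + t + 1) = (j + q).descFactorial q := by
  rw [Nat.descFactorial_eq_prod_range, ← Finset.prod_range_reflect]
  refine Finset.prod_congr rfl fun t ht => ?_
  simp only [Finset.mem_range] at ht
  omega

lemma prod_sub_desc (M q : ℕ) :
    ∏ t ∈ Finset.range q, (M - t) = M.descFactorial q :=
  (Nat.descFactorial_eq_prod_range M q).symm

lemma cJp_eq (N q j : ℕ) (h : j + q ≤ N) :
    cJp N q j = Real.sqrt (((j + q).descFactorial q * (N - j).descFactorial q : ℕ)) := by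
  rw [cJp]
  have h1 : ∀ t ∈ Finset.range q,
      Real.sqrt (((j : ℝ) + t + 1) * ((N : ℝ) - (j + t))) =
        Real.sqrt ((((j + t + 1) * (N - (j + t)) : ℕ) : ℝ)) := by
    intro t ht
    simp only [Finset.mem_range] at ht
    congr 1
    push_cast [Nat.cast_sub (by omega : j + t ≤ N)]
    ring
  rw [Finset.prod_congr rfl h1, sqrt_prod _ _ (fun t => Nat.cast_nonneg _)]
  congr 1
  rw [← Nat.cast_prod]
  congr 1
  rw [Finset.prod_mul_distrib, prod_shift_desc]
  congr 1
  rw [← prod_sub_desc (N - j) q]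
  refine Finset.prod_congr rfl fun t _ => by omega

lemma cJm_eq (N q j : ℕ) (h : j + q ≤ N) :
    cJm N q j = Real.sqrt (((j + q).descFactorial q * (N - j).descFactorial q : ℕ)) := by
  rw [cJm, ← cJp_eq N q j h, cJp]
  refine Finset.prod_congr rfl fun t ht => ?_
  simp only [Finset.mem_range] at ht
  congr 1
  ring

open Nat in
lemma desc_div (n q : ℕ) (h : q ≤ n) :
    ((n.descFactorial q : ℕ) : ℝ) = (n ! : ℝ) / ((n - q)! : ℝ) := by
  rw [eq_div_iff (by positivity), mul_comm]
  exact_mod_cast congrArg (Nat.cast : ℕ → ℝ) (Nat.factorial_mul_descFactorial h)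

open Nat in
lemma choose_div (n q : ℕ) (h : q ≤ n) :
    ((n.choose q : ℕ) : ℝ) = (n ! : ℝ) / ((q ! : ℝ) * ((n - q)! : ℝ)) := by
  rw [eq_div_iff (by positivity)]
  have := Nat.choose_mul_factorial_mul_factorial h
  push_cast [← this]
  ring

open Nat in
lemma key_real (N k m r : ℕ) (hk : k ≤ N) (hm : m ≤ N) (hrk : r ≤ k) (hrm : r ≤ m) :
    Real.sqrt ((k.descFactorial (k - r) * (N - r).descFactorial (k - r) : ℕ)) *
      Real.sqrt ((m.descFactorial (m - r) * (N - r).descFactorial (m - r) : ℕ)) *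
      ((N.descFactorial r : ℝ) * (r ! : ℝ)) =
    Real.sqrt (N.choose k) * Real.sqrt (N.choose m) *
      ((k.descFactorial r : ℝ) * ((k - r)! : ℝ) * ((m.descFactorial r : ℝ) * ((m - r)! : ℝ))) := by
  have hC : (0 : ℝ) ≤ (N.descFactorial r : ℝ) * (r ! : ℝ) := by positivity
  have hD : (0 : ℝ) ≤ (k.descFactorial r : ℝ) * ((k - r)! : ℝ) *
      ((m.descFactorial r : ℝ) * ((m - r)! : ℝ)) := by positivity
  rw [← Real.sqrt_mul (by positivity), ← Real.sqrt_sq hC, ← Real.sqrt_mul (by positivity),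
    ← Real.sqrt_mul (by positivity), ← Real.sqrt_sq hD, ← Real.sqrt_mul (by positivity)]
  congr 1
  have e1 : ((k.descFactorial (k - r) : ℕ) : ℝ) = (k ! : ℝ) / (r ! : ℝ) := by
    rw [desc_div k (k - r) (by omega), show k - (k - r) = r from by omega]
  have e2 : (((N - r).descFactorial (k - r) : ℕ) : ℝ) = ((N - r)! : ℝ) / ((N - k)! : ℝ) := by
    rw [desc_div (N - r) (k - r) (by omega), show N - r - (k - r) = N - k from by omega]
  have e3 : ((m.descFactorial (m - r) : ℕ) : ℝ) = (m ! : ℝ) / (r ! : ℝ) := by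
    rw [desc_div m (m - r) (by omega), show m - (m - r) = r from by omega]
  have e4 : (((N - r).descFactorial (m - r) : ℕ) : ℝ) = ((N - r)! : ℝ) / ((N - m)! : ℝ) := by
    rw [desc_div (N - r) (m - r) (by omega), show N - r - (m - r) = N - m from by omega]
  have e5 : ((N.descFactorial r : ℕ) : ℝ) = (N ! : ℝ) / ((N - r)! : ℝ) := desc_div N r (by omega)
  have e6 : ((k.descFactorial r : ℕ) : ℝ) = (k ! : ℝ) / ((k - r)! : ℝ) := desc_div k r hrk
  have e7 : ((m.descFactorial r : ℕ) : ℝ) = (m ! : ℝ) / ((m - r)! : ℝ) := desc_div m r hrm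
  have e8 : ((N.choose k : ℕ) : ℝ) = (N ! : ℝ) / ((k ! : ℝ) * ((N - k)! : ℝ)) := choose_div N k hk
  have e9 : ((N.choose m : ℕ) : ℝ) = (N ! : ℝ) / ((m ! : ℝ) * ((N - m)! : ℝ)) := choose_div N m hm
  push_cast
  rw [e1, e2, e3, e4, e5, e6, e7, e8, e9]
  have f1 : (r ! : ℝ) ≠ 0 := by positivity
  have f2 : ((N - r)! : ℝ) ≠ 0 := by positivity
  have f3 : ((N - k)! : ℝ) ≠ 0 := by positivity
  have f4 : ((N - m)! : ℝ) ≠ 0 := by positivity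
  have f5 : ((k - r)! : ℝ) ≠ 0 := by positivity
  have f6 : ((m - r)! : ℝ) ≠ 0 := by positivity
  have f7 : (k ! : ℝ) ≠ 0 := by positivity
  have f8 : (m ! : ℝ) ≠ 0 := by positivity
  field_simp

open Nat in
lemma descFactorial_pos' {q n : ℕ} (h : q ≤ n) : 0 < n.descFactorial q :=
  Nat.pos_of_ne_zero fun hz => by
    have := Nat.descFactorial_eq_zero_iff_lt.mp hz; omega

open Nat in
lemma core_real (N K M r : ℕ) (ρ : ℝ) (hρ : 0 < ρ) (hK : K ≤ N) (hM : M ≤ N)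
    (hrK : r ≤ K) (hrM : r ≤ M) :
    ρ ^ (K - r) * (((K - r)! : ℝ))⁻¹ *
      Real.sqrt ((K.descFactorial (K - r) * (N - r).descFactorial (K - r) : ℕ)) *
      ((1 + ρ ^ 2) ^ r / Real.sqrt ((1 + ρ ^ 2) ^ N)) *
      (ρ ^ (M - r) * (((M - r)! : ℝ))⁻¹ *
        Real.sqrt ((M.descFactorial (M - r) * (N - r).descFactorial (M - r) : ℕ))) =
    ρ ^ (M + K) / Real.sqrt ((1 + ρ ^ 2) ^ N) * Real.sqrt (N.choose K) * Real.sqrt (N.choose M) *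
      (((M.descFactorial r : ℝ) * (K.descFactorial r : ℝ) /
          ((N.descFactorial r : ℝ) * (r ! : ℝ))) * (1 / (ρ ^ 2 / (1 + ρ ^ 2))) ^ r) := by
  have ha : (0 : ℝ) < 1 + ρ ^ 2 := by positivity
  have hdN : (0 : ℝ) < (N.descFactorial r : ℝ) := by
    exact_mod_cast descFactorial_pos' (le_trans hrK hK)
  have hAB : Real.sqrt ((K.descFactorial (K - r) * (N - r).descFactorial (K - r) : ℕ)) *
      Real.sqrt ((M.descFactorial (M - r) * (N - r).descFactorial (M - r) : ℕ)) =
      Real.sqrt (N.choose K) * Real.sqrt (N.choose M) *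
        ((K.descFactorial r : ℝ) * ((K - r)! : ℝ) *
          ((M.descFactorial r : ℝ) * ((M - r)! : ℝ))) / ((N.descFactorial r : ℝ) * (r ! : ℝ)) := by
    rw [eq_div_iff (by positivity)]
    exact key_real N K M r hK hM hrK hrM
  calc
    _ = (Real.sqrt ((K.descFactorial (K - r) * (N - r).descFactorial (K - r) : ℕ)) *
          Real.sqrt ((M.descFactorial (M - r) * (N - r).descFactorial (M - r) : ℕ))) *
        (ρ ^ (K - r) * ρ ^ (M - r) * (((K - r)! : ℝ))⁻¹ * (((M - r)! : ℝ))⁻¹ *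
          ((1 + ρ ^ 2) ^ r / Real.sqrt ((1 + ρ ^ 2) ^ N))) := by ring
    _ = (Real.sqrt (N.choose K) * Real.sqrt (N.choose M) *
        ((K.descFactorial r : ℝ) * ((K - r)! : ℝ) *
          ((M.descFactorial r : ℝ) * ((M - r)! : ℝ))) / ((N.descFactorial r : ℝ) * (r ! : ℝ))) *
        (ρ ^ (K - r) * ρ ^ (M - r) * (((K - r)! : ℝ))⁻¹ * (((M - r)! : ℝ))⁻¹ *
          ((1 + ρ ^ 2) ^ r / Real.sqrt ((1 + ρ ^ 2) ^ N))) := by rw [hAB]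
    _ = _ := by
        rw [pow_sub₀ _ hρ.ne' hrK, pow_sub₀ _ hρ.ne' hrM, pow_add]
        have h1 : ((K - r)! : ℝ) ≠ 0 := by positivity
        have h2 : ((M - r)! : ℝ) ≠ 0 := by positivity
        have h3 : (r ! : ℝ) ≠ 0 := by positivity
        have h4 : Real.sqrt ((1 + ρ ^ 2) ^ N) ≠ 0 := by positivity
        have h5 : (ρ : ℝ) ≠ 0 := hρ.ne'
        have h6 : (1 + ρ ^ 2 : ℝ) ≠ 0 := ha.ne'
        field_simp
        have e : (ρ ^ r) ^ 2 * ((1 + ρ ^ 2) / ρ ^ 2) ^ r = (1 + ρ ^ 2) ^ r := by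
          rw [div_pow, ← pow_mul, ← pow_mul, mul_comm r 2]
          field_simp
        rw [mul_assoc _ ((ρ ^ r) ^ 2), e]

open Nat in
lemma real_term (N K M r : ℕ) (ρ : ℝ) (hρ : 0 < ρ) (hK : K ≤ N) (hM : M ≤ N)
    (hrK : r ≤ K) (hrM : r ≤ M) :
    ρ ^ (K - r) * (((K - r)! : ℝ))⁻¹ *
      Real.sqrt ((K.descFactorial (K - r) * (N - r).descFactorial (K - r) : ℕ)) *
      ((1 + ρ ^ 2) ^ r / Real.sqrt ((1 + ρ ^ 2) ^ N)) *
      ((-1 : ℝ) ^ (M - r) * ρ ^ (M - r) * (((M - r)! : ℝ))⁻¹ *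
        Real.sqrt ((M.descFactorial (M - r) * (N - r).descFactorial (M - r) : ℕ))) =
    (-1 : ℝ) ^ M * ρ ^ (M + K) / Real.sqrt ((1 + ρ ^ 2) ^ N) *
      Real.sqrt (N.choose K) * Real.sqrt (N.choose M) *
      (((-1 : ℝ) ^ r * (M.descFactorial r : ℝ)) * ((-1 : ℝ) ^ r * (K.descFactorial r : ℝ)) /
          (((-1 : ℝ) ^ r * (N.descFactorial r : ℝ)) * (r ! : ℝ)) * (1 / (ρ ^ 2 / (1 + ρ ^ 2))) ^ r) := by
  have hcore := core_real N K M r ρ hρ hK hM hrK hrM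
  have hM1 : ((-1 : ℝ)) ^ M = (-1) ^ (M - r) * (-1) ^ r := by
    rw [← pow_add, Nat.sub_add_cancel hrM]
  rw [hM1]
  rcases Nat.even_or_odd (M - r) with h2 | h2 <;> rcases Nat.even_or_odd r with h | h <;>
    simp only [h.neg_one_pow, h2.neg_one_pow] <;>
    first
      | linear_combination hcore
      | linear_combination -hcore

open Nat in
lemma term_main (N K M r : ℕ) (ρ δ : ℝ) (hρ : 0 < ρ) (hK : K ≤ N) (hM : M ≤ N)
    (hrK : r ≤ K) (hrM : r ≤ M) :
    ((ρ : ℂ) * Complex.exp (Complex.I * δ)) ^ (K - r) * (((K - r)! : ℂ))⁻¹ *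
        ((cJp N (K - r) r : ℝ) : ℂ) *
        Complex.exp (((Real.log (1 + ρ ^ 2) : ℝ) : ℂ) * ((r : ℂ) - (N : ℂ) / 2)) *
      ((-(starRingEnd ℂ) ((ρ : ℂ) * Complex.exp (Complex.I * δ))) ^ (M - r) *
          (((M - r)! : ℂ))⁻¹ * ((cJm N (M - r) r : ℝ) : ℂ)) =
    (-1) ^ M * ((ρ ^ (M + K) : ℝ) : ℂ) * Complex.exp (Complex.I * δ * ((K : ℂ) - (M : ℂ))) /
        ((Real.sqrt ((1 + ρ ^ 2) ^ N) : ℝ) : ℂ) * ((Real.sqrt (N.choose K) : ℝ) : ℂ) *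
        ((Real.sqrt (N.choose M) : ℝ) : ℂ) *
      ((Polynomial.eval (-(M : ℝ)) (ascPochhammer ℝ r) *
            Polynomial.eval (-(K : ℝ)) (ascPochhammer ℝ r) /
            (Polynomial.eval (-(N : ℝ)) (ascPochhammer ℝ r) * (r ! : ℝ)) *
          (1 / (ρ ^ 2 / (1 + ρ ^ 2))) ^ r : ℝ) : ℂ) := by
  have ha : (0 : ℝ) < 1 + ρ ^ 2 := by positivity
  rw [cJp_eq N (K - r) r (by omega), show r + (K - r) = K from by omega,
    cJm_eq N (M - r) r (by omega), show r + (M - r) = M from by omega]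
  have hconj : (starRingEnd ℂ) ((ρ : ℂ) * Complex.exp (Complex.I * δ)) =
      (ρ : ℂ) * Complex.exp (-(Complex.I * δ)) := by
    rw [map_mul, Complex.conj_ofReal, ← Complex.exp_conj, map_mul, Complex.conj_I,
      Complex.conj_ofReal, neg_mul]
  rw [hconj, neg_pow, mul_pow, mul_pow]
  have hEK : Complex.exp (Complex.I * ↑δ) ^ (K - r) =
      Complex.exp (((K - r : ℕ) : ℂ) * (Complex.I * δ)) := (Complex.exp_nat_mul _ _).symm
  have hEM : Complex.exp (-(Complex.I * ↑δ)) ^ (M - r) =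
      Complex.exp (((M - r : ℕ) : ℂ) * (-(Complex.I * δ))) := (Complex.exp_nat_mul _ _).symm
  have hexp2 : (Real.exp (((N : ℝ) * Real.log (1 + ρ ^ 2)) / 2)) ^ 2 = (1 + ρ ^ 2) ^ N := by
    rw [← Real.exp_nat_mul,
      show ((2 : ℕ) : ℝ) * (((N : ℝ) * Real.log (1 + ρ ^ 2)) / 2) =
        (N : ℝ) * Real.log (1 + ρ ^ 2) from by push_cast; ring,
      Real.exp_nat_mul, Real.exp_log ha]
  have hsqrt : Real.sqrt ((1 + ρ ^ 2) ^ N) = Real.exp (((N : ℝ) * Real.log (1 + ρ ^ 2)) / 2) := by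
    rw [← hexp2, Real.sqrt_sq (Real.exp_nonneg _)]
  have hd : Complex.exp (((Real.log (1 + ρ ^ 2) : ℝ) : ℂ) * ((r : ℂ) - (N : ℂ) / 2)) =
      (((1 + ρ ^ 2) ^ r / Real.sqrt ((1 + ρ ^ 2) ^ N) : ℝ) : ℂ) := by
    rw [show ((Real.log (1 + ρ ^ 2) : ℝ) : ℂ) * ((r : ℂ) - (N : ℂ) / 2) =
        (((r : ℝ) * Real.log (1 + ρ ^ 2) - ((N : ℝ) * Real.log (1 + ρ ^ 2)) / 2 : ℝ) : ℂ) from by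
          push_cast; ring,
      ← Complex.ofReal_exp]
    congr 1
    rw [Real.exp_sub, Real.exp_nat_mul, Real.exp_log ha, hsqrt]
  have hsplit : Complex.exp (Complex.I * ↑δ * ((K : ℂ) - (M : ℂ))) =
      Complex.exp (((K - r : ℕ) : ℂ) * (Complex.I * δ)) *
        Complex.exp (((M - r : ℕ) : ℂ) * (-(Complex.I * δ))) := by
    rw [← Complex.exp_add]
    congr 1
    push_cast [Nat.cast_sub hrK, Nat.cast_sub hrM]
    ring
  simp only [ascPochhammer_eval_neg_eq_descPochhammer, descPochhammer_eval_eq_descFactorial]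
  rw [hEK, hEM, hd, hsplit]
  have hre := real_term N K M r ρ hρ hK hM hrK hrM
  trans (Complex.exp (((K - r : ℕ) : ℂ) * (Complex.I * δ)) *
      Complex.exp (((M - r : ℕ) : ℂ) * (-(Complex.I * δ))) *
      ((ρ ^ (K - r) * (((K - r)! : ℝ))⁻¹ *
        Real.sqrt ((K.descFactorial (K - r) * (N - r).descFactorial (K - r) : ℕ)) *
        ((1 + ρ ^ 2) ^ r / Real.sqrt ((1 + ρ ^ 2) ^ N)) *
        ((-1 : ℝ) ^ (M - r) * ρ ^ (M - r) * (((M - r)! : ℝ))⁻¹ *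
          Real.sqrt ((M.descFactorial (M - r) * (N - r).descFactorial (M - r) : ℕ))) : ℝ) : ℂ))
  · push_cast
    ring
  rw [hre]
  push_cast
  ring

/-- Matrix elements of the coherent-state operator
`D(η) = e^{η J+} e^{μ J3} e^{-η̄ J-}`, `μ = log(1+|η|²)`, in terms of Krawtchouk
polynomials, with `η = ρ e^{iδ}` and `p = ρ²/(1+ρ²)`. -/
theorem coherent_matrix_elements (N : ℕ) (ρ δ : ℝ) (hρ : 0 < ρ)
    (k m : Fin (N + 1)) :
    (NormedSpace.exp (((ρ : ℂ) * Complex.exp (Complex.I * δ)) • Jp N) *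
        NormedSpace.exp ((Real.log (1 + ρ ^ 2) : ℂ) • J3 N) *
        NormedSpace.exp
          ((-(starRingEnd ℂ) ((ρ : ℂ) * Complex.exp (Complex.I * δ))) • Jm N)) k m =
      (-1) ^ (m : ℕ) * ((ρ ^ ((m : ℕ) + (k : ℕ)) : ℝ) : ℂ) *
          Complex.exp (Complex.I * δ * (((k : ℕ) : ℂ) - ((m : ℕ) : ℂ))) /
          (Real.sqrt ((1 + ρ ^ 2) ^ N) : ℂ) *
          (Real.sqrt (N.choose k) : ℂ) * (Real.sqrt (N.choose m) : ℂ) *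
          ((kraw (ρ ^ 2 / (1 + ρ ^ 2)) N m ((k : ℕ) : ℝ) : ℝ) : ℂ) := by
  rw [expJ3_eq, Matrix.mul_apply]
  simp only [Matrix.mul_diagonal, expJp_apply, expJm_apply]
  rw [kraw, Complex.ofReal_sum, Finset.mul_sum]
  rw [Finset.sum_subset (Finset.range_subset_range.mpr (by omega : (m:ℕ)+1 ≤ N+1))
    (fun x _ hxs => by
      have hmx : (m:ℕ) < x := by simpa using hxs
      rw [ascPochhammer_eval_neg_eq_descPochhammer, descPochhammer_eval_eq_descFactorial,
        Nat.descFactorial_eq_zero_iff_lt.mpr hmx]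
      simp)]
  rw [← Fin.sum_univ_eq_sum_range]
  refine Finset.sum_congr rfl fun j _ => ?_
  by_cases hjk : (j:ℕ) ≤ (k:ℕ)
  · by_cases hjm : (j:ℕ) ≤ (m:ℕ)
    · rw [if_pos hjk, if_pos hjm]
      exact term_main N (k:ℕ) (m:ℕ) (j:ℕ) ρ δ hρ (by omega) (by omega) hjk hjm
    · rw [if_neg hjm, mul_zero]
      rw [ascPochhammer_eval_neg_eq_descPochhammer, descPochhammer_eval_eq_descFactorial,
        Nat.descFactorial_eq_zero_iff_lt.mpr (by omega)]
      simp
  · rw [if_neg hjk, zero_mul, zero_mul]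
    simp only [ascPochhammer_eval_neg_eq_descPochhammer, descPochhammer_eval_eq_descFactorial]
    rw [Nat.descFactorial_eq_zero_iff_lt.mpr (show (k:ℕ) < (j:ℕ) by omega)]
    simp
end

section
/- The matrix elements λ_{k,m} = ⟨k| e^{ηJ+} e^{μJ3} e^{-η̄J-} |m⟩ (with μ = log(1+|η|²)) satisfy the unitarity relation Σ_{k=0}^{N} λ_{k,m} λ*_{k,n} = δ_{mn} for all 0 ≤ m, n ≤ N; i.e., D(η) is a unitary operator on C^{N+1}. -/
open NormedSpace Finset Matrix
open scoped Nat



namespace Coh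

variable {N : ℕ}

lemma jp_mul_jm : Jp N * Jm N =
    Matrix.diagonal (fun i : Fin (N+1) => ((i:ℕ):ℂ) * ((N:ℂ) - ((i:ℕ):ℂ) + 1)) := by
  ext i j
  rw [Matrix.mul_apply]
  rcases Nat.eq_zero_or_pos (i:ℕ) with h0 | hpos
  · rw [Finset.sum_eq_zero, Matrix.diagonal_apply]
    · split_ifs with h
      · rw [h0]; norm_num
      · rfl
    · intro k _
      have : ¬ ((i:ℕ) = (k:ℕ) + 1) := by omega
      simp [Jp, this]
  · have hiN : (i:ℕ) ≤ N := Nat.lt_succ_iff.mp i.isLt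
    set p := (i:ℕ) - 1 with hpdef
    have hip : (i:ℕ) = p + 1 := by omega
    have hpN : p < N + 1 := by omega
    have hpltN : p < N := by omega
    rw [Finset.sum_eq_single (⟨p, hpN⟩ : Fin (N+1))]
    · by_cases hij : i = j
      · subst hij
        rw [Matrix.diagonal_apply_eq]
        simp only [Jp, Jm, Matrix.of_apply, Fin.val_mk]
        rw [if_pos hip, if_pos hip.symm]
        have hple : ((p:ℕ):ℝ) ≤ (N:ℝ) := by exact_mod_cast hpltN.le
        have harg : ((i:ℕ):ℝ) * ((N:ℝ) - ((i:ℕ):ℝ) + 1) = (((p:ℕ):ℝ) + 1) * ((N:ℝ) - ((p:ℕ):ℝ)) := by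
          rw [hip]; push_cast; ring
        rw [harg, ← Complex.ofReal_mul, Real.mul_self_sqrt (by nlinarith)]
        push_cast [hip]
        ring
      · rw [Matrix.diagonal_apply_ne _ hij]
        simp only [Jp, Jm, Matrix.of_apply, Fin.val_mk]
        have hne : ¬ (p + 1 = (j:ℕ)) := by
          intro h; exact hij (Fin.ext (by omega))
        simp [hne]
    · intro b _ hb
      by_cases hc : (i:ℕ) = (b:ℕ) + 1
      · exact absurd (Fin.ext (show (b:ℕ) = p by omega)) hb
      · simp [Jp, hc]
    · simp

lemma jm_mul_jp : Jm N * Jp N =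
    Matrix.diagonal (fun i : Fin (N+1) => (((i:ℕ):ℂ) + 1) * ((N:ℂ) - ((i:ℕ):ℂ))) := by
  ext i j
  rw [Matrix.mul_apply]
  have hiN : (i:ℕ) ≤ N := Nat.lt_succ_iff.mp i.isLt
  rcases eq_or_lt_of_le hiN with hN | hlt
  · rw [Finset.sum_eq_zero, Matrix.diagonal_apply]
    · split_ifs with h
      · have hz : (N:ℂ) - ((i:ℕ):ℂ) = 0 := by rw [hN]; ring
        rw [hz]; ring
      · rfl
    · intro k _
      have hk : (k:ℕ) ≤ N := Nat.lt_succ_iff.mp k.isLt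
      have : ¬ ((i:ℕ) + 1 = (k:ℕ)) := by omega
      simp [Jm, this]
  · have hqN : (i:ℕ) + 1 < N + 1 := by omega
    rw [Finset.sum_eq_single (⟨(i:ℕ) + 1, hqN⟩ : Fin (N+1))]
    · by_cases hij : i = j
      · subst hij
        rw [Matrix.diagonal_apply_eq]
        simp only [Jm, Jp, Matrix.of_apply, Fin.val_mk]
        simp only [if_true]
        have hple : ((i:ℕ):ℝ) < (N:ℝ) := by exact_mod_cast hlt
        have harg : (((i:ℕ):ℝ) + 1) * ((N:ℝ) - (((i:ℕ):ℕ):ℝ) + 1 - 1) = (((i:ℕ):ℝ) + 1) * ((N:ℝ) - ((i:ℕ):ℝ)) := by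
          push_cast; ring
        have harg2 : (((i:ℕ) + 1 : ℕ):ℝ) * ((N:ℝ) - (((i:ℕ) + 1 : ℕ):ℝ) + 1) = (((i:ℕ):ℝ) + 1) * ((N:ℝ) - ((i:ℕ):ℝ)) := by
          push_cast; ring
        rw [harg2, ← Complex.ofReal_mul, Real.mul_self_sqrt (by nlinarith)]
        push_cast
        ring
      · rw [Matrix.diagonal_apply_ne _ hij]
        simp only [Jm, Jp, Matrix.of_apply, Fin.val_mk]
        have hne : ¬ ((i:ℕ) + 1 = (j:ℕ) + 1) := by
          intro h; exact hij (Fin.ext (by omega))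
        have hij' : (i:ℕ) ≠ (j:ℕ) := fun h => hij (Fin.ext h)
        simp [hne, hij']
    · intro b _ hb
      by_cases hc : (i:ℕ) + 1 = (b:ℕ)
      · exact absurd (Fin.ext (show (b:ℕ) = (i:ℕ) + 1 by omega)) hb
      · simp [Jm, hc]
    · simp

lemma bracket1 : J3 N * Jp N = Jp N * J3 N + Jp N := by
  ext i j
  simp only [J3, Matrix.diagonal_mul, Matrix.mul_diagonal, Matrix.add_apply, Jp, Matrix.of_apply]
  split_ifs with h
  · have hij : ((i:ℕ):ℂ) = ((j:ℕ):ℂ) + 1 := by exact_mod_cast h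
    rw [hij]; ring
  · simp

lemma bracket2 : Jp N * Jm N = Jm N * Jp N + (2:ℂ) • J3 N := by
  rw [jp_mul_jm, jm_mul_jp]
  ext i j
  by_cases h : i = j
  · subst h
    simp only [Matrix.diagonal_apply_eq, Matrix.add_apply, Matrix.smul_apply, J3,
      Matrix.diagonal_apply_eq, smul_eq_mul]
    ring
  · simp [Matrix.diagonal_apply_ne _ h, J3, h]

lemma star_jp : star (Jp N) = Jm N := by
  ext i j
  simp only [Matrix.star_apply, Jp, Jm, Matrix.of_apply]
  by_cases h : (i:ℕ) + 1 = (j:ℕ)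
  · rw [if_pos h.symm, if_pos h]
    have harg : ((j:ℕ):ℝ) * ((N:ℝ) - ((j:ℕ):ℝ) + 1) = (((i:ℕ):ℝ) + 1) * ((N:ℝ) - ((i:ℕ):ℝ)) := by
      have : ((j:ℕ):ℝ) = ((i:ℕ):ℝ) + 1 := by exact_mod_cast h.symm
      rw [this]; ring
    rw [harg, Complex.star_def, Complex.conj_ofReal]
  · rw [if_neg (fun hh => h hh.symm), if_neg h, star_zero]

lemma star_j3 : star (J3 N) = J3 N := by
  ext i j
  simp only [Matrix.star_apply, J3, Matrix.diagonal_apply]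
  by_cases h : i = j
  · subst h
    simp only [if_pos rfl, if_true]
    have hcast : ((i:ℕ):ℂ) - (N:ℂ)/2 = ((((i:ℕ):ℝ) - (N:ℝ)/2 : ℝ) : ℂ) := by push_cast; ring
    rw [hcast, Complex.star_def, Complex.conj_ofReal]
  · rw [if_neg (fun hh => h hh.symm), if_neg h, star_zero]

lemma jp_pow_apply_ne : ∀ (k : ℕ) (i j : Fin (N+1)), (i:ℕ) ≠ (j:ℕ) + k → (Jp N ^ k) i j = 0 := by
  intro k
  induction k with
  | zero =>
    intro i j h
    rw [pow_zero]
    exact Matrix.one_apply_ne (fun hij => h (by rw [hij]; omega))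
  | succ k ih =>
    intro i j h
    rw [pow_succ']
    rw [Matrix.mul_apply]
    apply Finset.sum_eq_zero
    intro b _
    by_cases hc : (i:ℕ) = (b:ℕ) + 1
    · rw [ih b j (by omega), mul_zero]
    · simp [Jp, hc]

lemma jp_pow_nilp : Jp N ^ (N+1) = 0 := by
  ext i j
  rw [Matrix.zero_apply]
  exact jp_pow_apply_ne (N+1) i j (by have := i.isLt; have := j.isLt; omega)

lemma jp_pow_nilp' {k : ℕ} (h : N + 1 ≤ k) : Jp N ^ k = 0 := by
  obtain ⟨l, rfl⟩ := Nat.exists_eq_add_of_le h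
  rw [pow_add, jp_pow_nilp, zero_mul]

lemma exp_nilpotent_sum (M : Matrix (Fin (N+1)) (Fin (N+1)) ℂ) (h : M ^ (N+1) = 0) :
    exp M = ∑ k ∈ Finset.range (N+2), ((k ! : ℂ))⁻¹ • M ^ k := by
  rw [NormedSpace.exp_eq_tsum (𝕂 := ℂ)]
  refine tsum_eq_sum ?_
  intro k hk
  have hk' : N + 1 ≤ k := by
    rcases Nat.lt_or_ge k (N+2) with hlt | hge
    · exact absurd (Finset.mem_range.mpr hlt) hk
    · omega
  obtain ⟨l, rfl⟩ := Nat.exists_eq_add_of_le hk'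
  rw [pow_add, h, zero_mul, smul_zero]

/-- Series coefficient. -/
noncomputable def cc (a : ℂ) (k : ℕ) : ℂ := a ^ k * ((k ! : ℂ))⁻¹

lemma cc_succ (a : ℂ) (k : ℕ) : cc a (k+1) * (((k:ℕ):ℂ)+1) = a * cc a k := by
  unfold cc
  have h2 : ((k ! : ℕ):ℂ) ≠ 0 := Nat.cast_ne_zero.mpr (Nat.factorial_ne_zero k)
  have h1 : (((k:ℕ):ℂ)+1) ≠ 0 := by
    have := Nat.cast_add_one_ne_zero (R := ℂ) k
    simpa using this
  rw [Nat.factorial_succ]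
  push_cast
  field_simp
  ring

lemma exp_smul_jp (a : ℂ) :
    exp (a • Jp N) = ∑ k ∈ Finset.range (N+2), cc a k • Jp N ^ k := by
  rw [exp_nilpotent_sum _ (by rw [smul_pow a (Jp N), jp_pow_nilp, smul_zero])]
  refine Finset.sum_congr rfl fun k _ => ?_
  rw [smul_pow a (Jp N), smul_smul, cc, mul_comm]

lemma jp_mul_j3 : Jp N * J3 N = J3 N * Jp N - Jp N := by
  rw [bracket1]; abel

lemma P1 (k : ℕ) : Jp N ^ k * J3 N = J3 N * Jp N ^ k - ((k:ℕ):ℂ) • Jp N ^ k := by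
  induction k with
  | zero => simp
  | succ k ih =>
    have step : Jp N ^ (k+1) * J3 N = (Jp N ^ k * J3 N) * Jp N - Jp N ^ (k+1) := by
      rw [pow_succ, mul_assoc, jp_mul_j3, mul_sub, ← mul_assoc, ← pow_succ]
    rw [step, ih, sub_mul, smul_mul_assoc]
    simp only [mul_assoc]
    simp only [← pow_succ]
    push_cast
    module

lemma P2 (k : ℕ) : Jp N ^ (k+1) * Jm N =
    Jm N * Jp N ^ (k+1) + (2*((k:ℕ):ℂ)+2) • (J3 N * Jp N ^ k)
      - (((k:ℕ):ℂ) * (((k:ℕ):ℂ)+1)) • Jp N ^ k := by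
  induction k with
  | zero => simpa using bracket2
  | succ k ih =>
    have h2 : Jp N * (Jp N ^ (k+1) * Jm N) = Jp N ^ (k+1+1) * Jm N := by
      rw [← mul_assoc, ← pow_succ']
    rw [← h2, ih]
    have e1 : Jp N * (Jm N * Jp N ^ (k+1)) =
        Jm N * Jp N ^ (k+1+1) + (2:ℂ) • (J3 N * Jp N ^ (k+1)) := by
      rw [← mul_assoc, bracket2, add_mul, smul_mul_assoc, mul_assoc, ← pow_succ']
    have e2 : Jp N * (J3 N * Jp N ^ k) = J3 N * Jp N ^ (k+1) - Jp N ^ (k+1) := by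
      rw [← mul_assoc, jp_mul_j3, sub_mul, mul_assoc, ← pow_succ']
    rw [mul_sub, mul_add, mul_smul_comm, mul_smul_comm, e1, e2]
    simp only [← pow_succ']
    push_cast
    module

lemma key_sum (a : ℂ) : ∑ k ∈ Finset.range (N+2), (cc a k * ((k:ℕ):ℂ)) • Jp N ^ k
    = (a • Jp N) * ∑ k ∈ Finset.range (N+2), cc a k • Jp N ^ k := by
  rw [Finset.sum_range_succ' _ (N+1), Finset.sum_range_succ _ (N+1)]
  rw [jp_pow_nilp, smul_zero, add_zero]
  rw [Nat.cast_zero, mul_zero, zero_smul, add_zero]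
  rw [smul_mul_assoc, Finset.mul_sum, Finset.smul_sum]
  refine Finset.sum_congr rfl fun k hk => ?_
  rw [mul_smul_comm, ← pow_succ', smul_smul]
  congr 1
  push_cast
  exact cc_succ a k

lemma CI1 (a : ℂ) : exp (a • Jp N) * J3 N = (J3 N - a • Jp N) * exp (a • Jp N) := by
  rw [exp_smul_jp]
  calc (∑ k ∈ Finset.range (N+2), cc a k • Jp N ^ k) * J3 N
      = ∑ k ∈ Finset.range (N+2), cc a k • (Jp N ^ k * J3 N) := by
        rw [Finset.sum_mul]; exact Finset.sum_congr rfl fun k _ => smul_mul_assoc _ _ _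
    _ = ∑ k ∈ Finset.range (N+2),
          (cc a k • (J3 N * Jp N ^ k) - (cc a k * ((k:ℕ):ℂ)) • Jp N ^ k) := by
        refine Finset.sum_congr rfl fun k _ => ?_
        rw [P1, smul_sub, smul_smul]
    _ = J3 N * (∑ k ∈ Finset.range (N+2), cc a k • Jp N ^ k)
          - ∑ k ∈ Finset.range (N+2), (cc a k * ((k:ℕ):ℂ)) • Jp N ^ k := by
        rw [Finset.sum_sub_distrib, Finset.mul_sum]
        congr 1
        exact Finset.sum_congr rfl fun k _ => (mul_smul_comm _ _ _).symm
    _ = J3 N * (∑ k ∈ Finset.range (N+2), cc a k • Jp N ^ k)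
          - (a • Jp N) * (∑ k ∈ Finset.range (N+2), cc a k • Jp N ^ k) := by
        rw [key_sum]
    _ = (J3 N - a • Jp N) * (∑ k ∈ Finset.range (N+2), cc a k • Jp N ^ k) :=
        (sub_mul _ _ _).symm

lemma pieceA (a : ℂ) :
    (∑ k ∈ Finset.range (N+1), cc a (k+1) • (Jm N * Jp N ^ (k+1))) + cc a 0 • (Jm N * Jp N ^ 0)
      = Jm N * ∑ k ∈ Finset.range (N+2), cc a k • Jp N ^ k := by
  rw [← Finset.sum_range_succ' (fun k => cc a k • (Jm N * Jp N ^ k)) (N+1), Finset.mul_sum]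
  exact Finset.sum_congr rfl fun k _ => (mul_smul_comm _ _ _).symm

lemma pieceB (a : ℂ) :
    ∑ k ∈ Finset.range (N+1), (2*a*cc a k) • (J3 N * Jp N ^ k)
      = (2*a) • (J3 N * ∑ k ∈ Finset.range (N+2), cc a k • Jp N ^ k) := by
  have htrim : (∑ k ∈ Finset.range (N+2), cc a k • Jp N ^ k)
      = ∑ k ∈ Finset.range (N+1), cc a k • Jp N ^ k := by
    rw [Finset.sum_range_succ, jp_pow_nilp, smul_zero, add_zero]
  rw [htrim, Finset.mul_sum, Finset.smul_sum]
  refine Finset.sum_congr rfl fun k _ => ?_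
  rw [mul_smul_comm, smul_smul]

lemma pieceC (a : ℂ) :
    ∑ k ∈ Finset.range (N+1), (((k:ℕ):ℂ) * (a * cc a k)) • Jp N ^ k
      = (a^2) • (Jp N * ∑ k ∈ Finset.range (N+2), cc a k • Jp N ^ k) := by
  rw [Finset.mul_sum, Finset.smul_sum]
  have hterm : ∀ k : ℕ, (a^2:ℂ) • (Jp N * (cc a k • Jp N ^ k)) = (a^2 * cc a k) • Jp N ^ (k+1) := by
    intro k; rw [mul_smul_comm, ← pow_succ', smul_smul]
  simp only [hterm]
  rw [Finset.sum_range_succ' (fun k => (((k:ℕ):ℂ) * (a * cc a k)) • Jp N ^ k) N,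
    Nat.cast_zero, zero_mul, zero_smul, add_zero]
  rw [Finset.sum_range_succ (fun k => (a^2*cc a k) • Jp N ^ (k+1)) (N+1),
    Finset.sum_range_succ (fun k => (a^2*cc a k) • Jp N ^ (k+1)) N]
  rw [show Jp N ^ (N+1+1) = 0 from jp_pow_nilp' (by omega),
    show Jp N ^ (N+1) = 0 from jp_pow_nilp, smul_zero, smul_zero, add_zero, add_zero]
  refine Finset.sum_congr rfl fun k _ => ?_
  congr 1
  have h := cc_succ a k
  push_cast
  calc ((k:ℂ)+1) * (a * cc a (k+1)) = a * (cc a (k+1) * ((k:ℂ)+1)) := by ring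
    _ = a * (a * cc a k) := by rw [show cc a (k+1) * ((k:ℂ)+1) = a * cc a k from h]
    _ = a^2 * cc a k := by ring

lemma CI3 (a : ℂ) : exp (a • Jp N) * Jm N
    = (Jm N + (2*a) • J3 N - (a^2) • Jp N) * exp (a • Jp N) := by
  rw [exp_smul_jp]
  calc (∑ k ∈ Finset.range (N+2), cc a k • Jp N ^ k) * Jm N
      = ∑ k ∈ Finset.range (N+2), cc a k • (Jp N ^ k * Jm N) := by
        rw [Finset.sum_mul]; exact Finset.sum_congr rfl fun k _ => smul_mul_assoc _ _ _
    _ = (∑ k ∈ Finset.range (N+1), cc a (k+1) • (Jp N ^ (k+1) * Jm N))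
          + cc a 0 • (Jp N ^ 0 * Jm N) := Finset.sum_range_succ' _ _
    _ = (∑ k ∈ Finset.range (N+1),
            (cc a (k+1) • (Jm N * Jp N ^ (k+1))
              + (2*a*cc a k) • (J3 N * Jp N ^ k)
              - (((k:ℕ):ℂ) * (a * cc a k)) • Jp N ^ k))
          + cc a 0 • (Jm N * Jp N ^ 0) := by
        congr 1
        · refine Finset.sum_congr rfl fun k _ => ?_
          rw [P2, smul_sub, smul_add, smul_smul, smul_smul]
          have h := cc_succ a k
          have e1 : cc a (k+1) * (2*((k:ℕ):ℂ)+2) = 2*a*cc a k := by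
            calc cc a (k+1) * (2*((k:ℕ):ℂ)+2) = 2*(cc a (k+1) * (((k:ℕ):ℂ)+1)) := by ring
              _ = 2*(a * cc a k) := by rw [show cc a (k+1) * (((k:ℕ):ℂ)+1) = a * cc a k from h]
              _ = 2*a*cc a k := by ring
          have e2 : cc a (k+1) * (((k:ℕ):ℂ) * (((k:ℕ):ℂ)+1)) = ((k:ℕ):ℂ) * (a * cc a k) := by
            calc cc a (k+1) * (((k:ℕ):ℂ) * (((k:ℕ):ℂ)+1))
                = ((k:ℕ):ℂ) * (cc a (k+1) * (((k:ℕ):ℂ)+1)) := by ring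
              _ = ((k:ℕ):ℂ) * (a * cc a k) := by
                  rw [show cc a (k+1) * (((k:ℕ):ℂ)+1) = a * cc a k from h]
          rw [e1, e2]
        · rw [pow_zero, one_mul, mul_one]
    _ = ((∑ k ∈ Finset.range (N+1), cc a (k+1) • (Jm N * Jp N ^ (k+1)))
            + cc a 0 • (Jm N * Jp N ^ 0))
          + (∑ k ∈ Finset.range (N+1), (2*a*cc a k) • (J3 N * Jp N ^ k))
          - (∑ k ∈ Finset.range (N+1), (((k:ℕ):ℂ) * (a * cc a k)) • Jp N ^ k) := by
        rw [Finset.sum_sub_distrib, Finset.sum_add_distrib]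
        abel
    _ = Jm N * (∑ k ∈ Finset.range (N+2), cc a k • Jp N ^ k)
          + (2*a) • (J3 N * (∑ k ∈ Finset.range (N+2), cc a k • Jp N ^ k))
          - (a^2) • (Jp N * (∑ k ∈ Finset.range (N+2), cc a k • Jp N ^ k)) := by
        rw [pieceA, pieceB, pieceC]
    _ = (Jm N + (2*a) • J3 N - (a^2) • Jp N)
          * (∑ k ∈ Finset.range (N+2), cc a k • Jp N ^ k) := by
        rw [sub_mul, add_mul, smul_mul_assoc, smul_mul_assoc]

lemma smul_j3_diag (z : ℂ) : z • J3 N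
    = Matrix.diagonal (fun k : Fin (N+1) => z * (((k:ℕ):ℂ) - (N:ℂ)/2)) := by
  ext i j
  by_cases h : i = j
  · subst h; simp [J3, Matrix.smul_apply, Matrix.diagonal_apply_eq, smul_eq_mul]
  · simp [J3, Matrix.smul_apply, Matrix.diagonal_apply_ne _ h]

lemma exp_smul_j3 (z : ℂ) : exp (z • J3 N)
    = Matrix.diagonal (fun k : Fin (N+1) => Complex.exp (z * (((k:ℕ):ℂ) - (N:ℂ)/2))) := by
  rw [smul_j3_diag, Matrix.exp_diagonal, Pi.exp_def]
  simp [Complex.exp_eq_exp_ℂ]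

lemma CI2 (z : ℂ) : exp (z • J3 N) * Jm N
    = Complex.exp (-z) • (Jm N * exp (z • J3 N)) := by
  rw [exp_smul_j3]
  ext i j
  rw [Matrix.smul_apply, Matrix.diagonal_mul, Matrix.mul_diagonal]
  by_cases h : (i:ℕ) + 1 = (j:ℕ)
  · have hji : ((j:ℕ):ℂ) = ((i:ℕ):ℂ) + 1 := by exact_mod_cast h.symm
    have hdj : Complex.exp (z * (((j:ℕ):ℂ) - (N:ℂ)/2))
        = Complex.exp z * Complex.exp (z * (((i:ℕ):ℂ) - (N:ℂ)/2)) := by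
      rw [← Complex.exp_add]; congr 1; rw [hji]; ring
    rw [smul_eq_mul, hdj, Complex.exp_neg]
    have hne := Complex.exp_ne_zero z
    field_simp
  · have : Jm N i j = 0 := by simp [Jm, h]
    rw [this, smul_eq_mul]
    ring

lemma star_jm : star (Jm N) = Jp N := by rw [← star_jp, star_star]

section Analysis

attribute [local instance] Matrix.frobeniusNormedAddCommGroup Matrix.frobeniusNormedRing
  Matrix.frobeniusNormedAlgebra Matrix.frobeniusNormedSpace Matrix.frobeniusIsBoundedSMul

lemma hasDerivAt_exp_aux (M : Matrix (Fin (N+1)) (Fin (N+1)) ℂ) (t : ℝ) :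
    HasDerivAt (fun u : ℝ => exp (u • M)) (M * exp (t • M)) t := by
  have h := hasDerivAt_exp_smul_const' (𝕂 := ℝ) M t
  exact h

lemma real_smul_eq (r : ℝ) (M : Matrix (Fin (N+1)) (Fin (N+1)) ℂ) :
    r • M = ((r : ℂ)) • M := (Complex.coe_smul r M).symm

end Analysis

/-- The one-parameter family of coherent operators. -/
noncomputable def Dm (N : ℕ) (η : ℂ) (t : ℝ) : Matrix (Fin (N+1)) (Fin (N+1)) ℂ :=
  exp (t • (η • Jp N)) * exp ((Real.log (1 + t^2 * ‖η‖ ^2)) • J3 N)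
    * exp (t • ((-(starRingEnd ℂ) η) • Jm N))

section Analysis2

attribute [local instance] Matrix.frobeniusNormedAddCommGroup Matrix.frobeniusNormedRing
  Matrix.frobeniusNormedAlgebra Matrix.frobeniusNormedSpace Matrix.frobeniusIsBoundedSMul

lemma hasDerivAt_Dm (η : ℂ) (t : ℝ) :
    HasDerivAt (Dm N η)
      ((((1 + t^2 * ‖η‖ ^2)⁻¹ : ℝ) •
        (η • Jp N - (starRingEnd ℂ) η • Jm N)) * Dm N η t) t := by
  have hx0 : (0:ℝ) ≤ ‖η‖ ^ 2 := by positivity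
  have hs : (0:ℝ) < 1 + t^2 * ‖η‖ ^ 2 := by positivity
  set a : ℂ := (t:ℂ) * η with hadef
  have hA := hasDerivAt_exp_aux (η • Jp N) t
  have hC := hasDerivAt_exp_aux ((-(starRingEnd ℂ) η) • Jm N) t
  have hf : HasDerivAt (fun u:ℝ => 1 + u^2 * ‖η‖ ^ 2) (2*t*‖η‖ ^ 2) t := by
    have h := ((hasDerivAt_pow 2 t).mul_const (‖η‖ ^ 2)).const_add (1:ℝ)
    refine h.congr_deriv ?_
    norm_num
  have hμ : HasDerivAt (fun u:ℝ => Real.log (1 + u^2 * ‖η‖ ^ 2))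
      (2*t*‖η‖ ^ 2 / (1 + t^2 * ‖η‖ ^ 2)) t := hf.log (ne_of_gt hs)
  have hB : HasDerivAt (fun u:ℝ => exp (Real.log (1 + u^2 * ‖η‖ ^ 2) • J3 N))
      ((2*t*‖η‖ ^ 2 / (1 + t^2 * ‖η‖ ^ 2)) •
        (J3 N * exp (Real.log (1 + t^2 * ‖η‖ ^ 2) • J3 N))) t := by
    have houter := hasDerivAt_exp_aux (J3 N) (Real.log (1 + t^2 * ‖η‖ ^ 2))
    have hcomp := HasDerivAt.scomp t houter hμ
    exact hcomp
  have hD := (hA.mul hB).mul hC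
  set A := exp (t • (η • Jp N)) with hAdef
  set B := exp (Real.log (1 + t^2 * ‖η‖ ^ 2) • J3 N) with hBdef
  set C := exp (t • ((-(starRingEnd ℂ) η) • Jm N)) with hCdef
  have f1 : t • (η • Jp N) = a • Jp N := by
    rw [← smul_assoc, hadef, Complex.real_smul]
  have f2 : Real.log (1 + t^2 * ‖η‖ ^ 2) • J3 N
      = ((Real.log (1 + t^2 * ‖η‖ ^ 2) : ℂ)) • J3 N := real_smul_eq _ _
  have g1 : A * J3 N = (J3 N - a • Jp N) * A := by
    rw [hAdef, f1, CI1 a]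
  have g3 : A * Jm N = (Jm N + (2*a) • J3 N - (a^2) • Jp N) * A := by
    rw [hAdef, f1, CI3 a]
  have hsinv : Complex.exp (-((Real.log (1 + t^2 * ‖η‖ ^ 2) : ℝ) : ℂ))
      = (((1 + t^2 * ‖η‖ ^ 2)⁻¹ : ℝ) : ℂ) := by
    rw [← Complex.ofReal_neg, ← Complex.ofReal_exp, Real.exp_neg, Real.exp_log hs]
  have g2 : B * Jm N = (((1 + t^2 * ‖η‖ ^ 2)⁻¹ : ℝ) : ℂ) • (Jm N * B) := by
    rw [hBdef, f2, CI2, hsinv]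
  have g1' : ∀ Z, A * (J3 N * Z) = J3 N * (A * Z) - a • (Jp N * (A * Z)) := by
    intro Z
    rw [← mul_assoc, g1, mul_assoc, sub_mul, smul_mul_assoc]
  have g3' : ∀ Z, A * (Jm N * Z)
      = Jm N * (A * Z) + (2*a) • (J3 N * (A * Z)) - (a^2) • (Jp N * (A * Z)) := by
    intro Z
    rw [← mul_assoc, g3, mul_assoc, sub_mul, add_mul, smul_mul_assoc, smul_mul_assoc]
  have g2' : ∀ Z, B * (Jm N * Z)
      = (((1 + t^2 * ‖η‖ ^ 2)⁻¹ : ℝ) : ℂ) • (Jm N * (B * Z)) := by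
    intro Z
    rw [← mul_assoc, g2, smul_mul_assoc, mul_assoc]
  have hconj : (starRingEnd ℂ) η * η = ((‖η‖ ^ 2 : ℝ) : ℂ) := by
    rw [mul_comm, Complex.mul_conj]
    norm_cast
    rw [Complex.sq_norm]
  have hsC : (((1 + t^2 * ‖η‖ ^ 2 : ℝ)):ℂ)
      * (((1 + t^2 * ‖η‖ ^ 2 : ℝ)):ℂ)⁻¹ = 1 :=
    mul_inv_cancel₀ (by exact_mod_cast hs.ne')
  refine hD.congr_deriv ?_
  symm
  show ((((1 + t^2 * ‖η‖ ^ 2)⁻¹ : ℝ) • (η • Jp N - (starRingEnd ℂ) η • Jm N))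
        * (A * B * C))
      = (η • Jp N * A * B
          + A * ((2*t*‖η‖ ^ 2 / (1 + t^2 * ‖η‖ ^ 2)) • (J3 N * B))) * C
        + A * B * ((-(starRingEnd ℂ) η) • Jm N * C)
  rw [real_smul_eq ((1 + t^2 * ‖η‖ ^ 2)⁻¹),
    real_smul_eq (2*t*‖η‖ ^ 2 / (1 + t^2 * ‖η‖ ^ 2))]
  simp only [smul_mul_assoc, mul_smul_comm, mul_assoc, add_mul, sub_mul]
  rw [g1' (B * C), g2' C, mul_smul_comm, g3' (B * C)]
  push_cast at hconj hsC ⊢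
  match_scalars
  · linear_combination (-((t:ℂ)^2)*η*(1 + (t:ℂ)^2*((‖η‖:ℝ):ℂ)^2)⁻¹) * hconj + η * hsC
  · ring
  · linear_combination (2*(t:ℂ)*(1 + (t:ℂ)^2*((‖η‖:ℝ):ℂ)^2)⁻¹) * hconj

lemma star_K (η : ℂ) (r : ℝ) :
    star (r • (η • Jp N - (starRingEnd ℂ) η • Jm N))
      = -(r • (η • Jp N - (starRingEnd ℂ) η • Jm N)) := by
  rw [star_smul, star_trivial, star_sub, star_smul, star_smul, star_jp, star_jm]
  simp only [Complex.star_def, Complex.conj_conj]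
  module

lemma Dm_unitary (η : ℂ) : star (Dm N η 1) * Dm N η 1 = 1 := by
  have hU : ∀ t : ℝ, HasDerivAt (fun u : ℝ => star (Dm N η u) * Dm N η u) 0 t := by
    intro t
    have hD := hasDerivAt_Dm (N := N) η t
    have hM := hD.star.mul hD
    refine hM.congr_deriv ?_
    rw [Matrix.star_mul, star_K]
    set X := ((1 + t^2 * ‖η‖ ^2)⁻¹ : ℝ) • (η • Jp N - (starRingEnd ℂ) η • Jm N)
    rw [mul_neg, neg_mul, mul_assoc, neg_add_cancel]
  have hconst := is_const_of_deriv_eq_zero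
    (fun t : ℝ => (hU t).differentiableAt)
    (fun t : ℝ => (hU t).deriv) 1 0
  have h0 : star (Dm N η 0) * Dm N η 0 = 1 := by
    have hz : Dm N η 0 = 1 := by
      unfold Dm
      norm_num [Real.log_one, zero_smul, NormedSpace.exp_zero]
    rw [hz, star_one, one_mul]
  rw [← h0]
  exact hconst

end Analysis2

end Coh


/-- The coherent-state operator `D(η) = e^{η J+} e^{μ J3} e^{-η̄ J-}` with
`μ = log(1+|η|²)` is unitary: its matrix elements satisfy
`Σ_k λ_{k,m} λ*_{k,n} = δ_{mn}`. -/
theorem coherent_operator_unitary (N : ℕ) (η : ℂ) (m n : Fin (N + 1)) :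
    (∑ k : Fin (N + 1),
        (NormedSpace.exp (η • Jp N) *
            NormedSpace.exp ((Real.log (1 + ‖η‖ ^ 2) : ℂ) • J3 N) *
            NormedSpace.exp ((-(starRingEnd ℂ) η) • Jm N)) k m *
          (starRingEnd ℂ)
            ((NormedSpace.exp (η • Jp N) *
                NormedSpace.exp ((Real.log (1 + ‖η‖ ^ 2) : ℂ) • J3 N) *
                NormedSpace.exp ((-(starRingEnd ℂ) η) • Jm N)) k n)) =
      if m = n then 1 else 0 := by
  set DD := NormedSpace.exp (η • Jp N) *
      NormedSpace.exp ((Real.log (1 + ‖η‖ ^ 2) : ℂ) • J3 N) *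
      NormedSpace.exp ((-(starRingEnd ℂ) η) • Jm N) with hDDdef
  have hu := Coh.Dm_unitary (N := N) η
  have hDm1 : Coh.Dm N η 1 = DD := by
    unfold Coh.Dm
    rw [show (1:ℝ)^2 * ‖η‖ ^ 2 = ‖η‖ ^2 by norm_num,
      one_smul, one_smul, Coh.real_smul_eq (Real.log (1 + ‖η‖ ^2)) (J3 N), hDDdef]
  rw [hDm1] at hu
  have h1 : (star DD * DD) n m = (1 : Matrix (Fin (N+1)) (Fin (N+1)) ℂ) n m := by rw [hu]
  rw [Matrix.mul_apply, Matrix.one_apply] at h1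
  simp only [Matrix.star_apply] at h1
  calc (∑ k : Fin (N+1), DD k m * (starRingEnd ℂ) (DD k n))
      = ∑ k : Fin (N+1), star (DD k n) * DD k m :=
        Finset.sum_congr rfl (fun k _ => mul_comm _ _)
    _ = if n = m then 1 else 0 := h1
    _ = if m = n then 1 else 0 := by simp [eq_comm]
end

section
/- For the su(2) coherent state |η⟩, the squeezing parameter Z₃² = N(ΔJ3)²/(⟨J1⟩² + ⟨J2⟩²) equals exactly 1 for every η ≠ 0; hence pure su(2) coherent states are never squeezed along the J3 axis. -/
/-- The normalized su(2) coherent state `|η⟩`, `η = ρ e^{iδ}`. -/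
noncomputable def coh (N : ℕ) (ρ δ : ℝ) : Fin (N + 1) → ℂ := fun k =>
  ((Real.sqrt (N.choose k) * ρ ^ (k : ℕ) / Real.sqrt ((1 + ρ ^ 2) ^ N) : ℝ) : ℂ) *
    Complex.exp (Complex.I * δ * (k : ℕ))

/-- The expectation value `⟨v|A|v⟩`. -/
noncomputable def expVal (N : ℕ) (v : Fin (N + 1) → ℂ)
    (A : Matrix (Fin (N + 1)) (Fin (N + 1)) ℂ) : ℂ :=
  dotProduct (star v) (A.mulVec v)

open Finset

/- ============ binomial sum lemmas ============ -/
lemma sumA (N : ℕ) (x : ℂ) : ∑ k ∈ range (N+1), (N.choose k : ℂ) * x^k = (1+x)^N := by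
  have := add_pow x 1 N
  simp only [one_pow, mul_one] at this
  rw [add_comm 1 x, this]
  exact Finset.sum_congr rfl fun k _ => by ring

lemma choose_mul (m k : ℕ) :
    ((k:ℂ)+1) * ((m+1).choose (k+1) : ℂ) = ((m:ℂ)+1) * (m.choose k : ℂ) := by
  have h2 : ((Nat.succ m * m.choose k : ℕ) : ℂ) = (((m+1).choose (k+1) * (k+1) : ℕ) : ℂ) := by
    rw [Nat.add_one_mul_choose_eq]
  push_cast at h2
  linear_combination -h2

lemma sumB (N : ℕ) (x : ℂ) :
    ∑ k ∈ range (N+1), (k : ℂ) * (N.choose k : ℂ) * x^k = N * x * (1+x)^(N-1) := by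
  cases N with
  | zero => simp
  | succ m =>
    rw [Finset.sum_range_succ']
    simp only [Nat.cast_zero, zero_mul, add_zero, Nat.cast_add, Nat.cast_one,
      Nat.succ_sub_one]
    have : ∀ k ∈ range (m+1), ((k:ℂ)+1) * ((m+1).choose (k+1) : ℂ) * x^(k+1)
        = ((m:ℂ)+1) * x * ((m.choose k : ℂ) * x^k) := by
      intro k _
      rw [pow_succ]
      linear_combination (x^k*x) * choose_mul m k
    rw [Finset.sum_congr rfl this, ← Finset.mul_sum, sumA]

lemma sumC (N : ℕ) (x : ℂ) :
    ∑ k ∈ range (N+1), (k : ℂ) * ((k:ℂ)-1) * (N.choose k : ℂ) * x^k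
      = N * ((N:ℂ)-1) * x^2 * (1+x)^(N-2) := by
  cases N with
  | zero => simp
  | succ m =>
    rw [Finset.sum_range_succ']
    simp only [Nat.cast_zero, zero_mul, add_zero, Nat.cast_add, Nat.cast_one]
    have : ∀ k ∈ range (m+1), ((k:ℂ)+1) * (((k:ℂ)+1)-1) * ((m+1).choose (k+1) : ℂ) * x^(k+1)
        = ((m:ℂ)+1) * x * ((k:ℂ) * (m.choose k : ℂ) * x^k) := by
      intro k _
      rw [pow_succ]
      linear_combination ((k:ℂ)*(x^k*x)) * choose_mul m k
    rw [Finset.sum_congr rfl this, ← Finset.mul_sum, sumB]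
    have h1 : m + 1 - 2 = m - 1 := rfl
    rw [h1]
    ring

/- ============ coherent state amplitudes ============ -/
noncomputable def cc (N : ℕ) (ρ δ : ℝ) (k : ℕ) : ℂ :=
  ((Real.sqrt (N.choose k) * ρ ^ k / Real.sqrt ((1 + ρ ^ 2) ^ N) : ℝ) : ℂ) *
    Complex.exp (Complex.I * δ * k)

lemma coh_eq (N : ℕ) (ρ δ : ℝ) : coh N ρ δ = fun i : Fin (N+1) => cc N ρ δ ↑i := rfl

/-- diagonal term -/
lemma conj_cc_mul (N : ℕ) (ρ δ : ℝ) (k : ℕ) (z : ℂ) :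
    (starRingEnd ℂ) (cc N ρ δ k) * (z * cc N ρ δ k)
      = (((N.choose k : ℝ) * (ρ^2) ^ k / (1 + ρ ^ 2) ^ N : ℝ) : ℂ) * z := by
  unfold cc
  rw [map_mul, Complex.conj_ofReal]
  have h2 : (starRingEnd ℂ) (Complex.exp (Complex.I * δ * k)) * Complex.exp (Complex.I * δ * k)
      = 1 := by
    rw [← Complex.exp_conj, ← Complex.exp_add]
    have : (starRingEnd ℂ) (Complex.I * δ * k) = -(Complex.I * δ * k) := by
      simp [map_mul, Complex.conj_I, Complex.conj_ofReal]
    rw [this, neg_add_cancel, Complex.exp_zero]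
  have h1 : (Real.sqrt (N.choose k) * ρ ^ k / Real.sqrt ((1 + ρ ^ 2) ^ N)) *
      (Real.sqrt (N.choose k) * ρ ^ k / Real.sqrt ((1 + ρ ^ 2) ^ N))
      = (N.choose k : ℝ) * (ρ^2) ^ k / (1 + ρ ^ 2) ^ N := by
    rw [div_mul_div_comm, Real.mul_self_sqrt (by positivity)]
    congr 1
    have : Real.sqrt (N.choose k) * ρ ^ k * (Real.sqrt (N.choose k) * ρ ^ k)
        = Real.sqrt (N.choose k) * Real.sqrt (N.choose k) * (ρ^k * ρ^k) := by ring
    rw [this, Real.mul_self_sqrt (by positivity), ← pow_add, ← two_mul, pow_mul]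
  calc ((Real.sqrt (N.choose k) * ρ ^ k / Real.sqrt ((1 + ρ ^ 2) ^ N) : ℝ) : ℂ) *
        (starRingEnd ℂ) (Complex.exp (Complex.I * δ * k)) *
        (z * (((Real.sqrt (N.choose k) * ρ ^ k / Real.sqrt ((1 + ρ ^ 2) ^ N) : ℝ) : ℂ) *
          Complex.exp (Complex.I * δ * k)))
      = (((Real.sqrt (N.choose k) * ρ ^ k / Real.sqrt ((1 + ρ ^ 2) ^ N) : ℝ) : ℂ) *
          ((Real.sqrt (N.choose k) * ρ ^ k / Real.sqrt ((1 + ρ ^ 2) ^ N) : ℝ) : ℂ)) *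
          ((starRingEnd ℂ) (Complex.exp (Complex.I * δ * k)) *
            Complex.exp (Complex.I * δ * k)) * z := by ring
    _ = (((N.choose k : ℝ) * (ρ^2) ^ k / (1 + ρ ^ 2) ^ N : ℝ) : ℂ) * z := by
        rw [h2, mul_one, ← Complex.ofReal_mul, h1]

/-- real cross amplitude -/
lemma ampcross (N j : ℕ) (ρ : ℝ) (hj : j < N) :
    (Real.sqrt (N.choose (j+1)) * ρ ^ (j+1) / Real.sqrt ((1 + ρ ^ 2) ^ N)) *
      (Real.sqrt (N.choose j) * ρ ^ j / Real.sqrt ((1 + ρ ^ 2) ^ N)) *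
      Real.sqrt (((j:ℝ)+1) * ((N:ℝ)-(j:ℝ)))
    = (N.choose j : ℝ) * ((N:ℝ)-(j:ℝ)) * ρ * (ρ^2) ^ j / (1 + ρ ^ 2) ^ N := by
  have hN0 : (0:ℝ) ≤ (N:ℝ) - (j:ℝ) := by
    have := hj.le
    push_cast
    have : (j:ℝ) ≤ N := by exact_mod_cast this
    linarith
  have hnat : (N.choose (j+1) : ℝ) * ((j:ℝ)+1) = (N.choose j : ℝ) * ((N:ℝ) - (j:ℝ)) := by
    have h := Nat.choose_succ_right_eq N j
    have h2 : ((N.choose (j+1) * (j+1) : ℕ) : ℝ) = ((N.choose j * (N - j) : ℕ) : ℝ) := by rw [h]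
    push_cast [Nat.cast_sub hj.le] at h2
    linarith
  have hkey : Real.sqrt (N.choose (j+1)) * Real.sqrt (N.choose j) *
      Real.sqrt (((j:ℝ)+1) * ((N:ℝ)-(j:ℝ))) = (N.choose j : ℝ) * ((N:ℝ)-(j:ℝ)) := by
    rw [← Real.sqrt_mul (by positivity), ← Real.sqrt_mul (by positivity)]
    have : (N.choose (j+1) : ℝ) * (N.choose j : ℝ) * (((j:ℝ)+1) * ((N:ℝ)-(j:ℝ)))
        = ((N.choose j : ℝ) * ((N:ℝ)-(j:ℝ)))^2 := by
      linear_combination ((N.choose j : ℝ) * ((N:ℝ)-(j:ℝ))) * hnat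
    rw [this, Real.sqrt_sq (by positivity)]
  have h0 : Real.sqrt ((1 + ρ ^ 2) ^ N) * Real.sqrt ((1 + ρ ^ 2) ^ N) = (1 + ρ ^ 2)^N :=
    Real.mul_self_sqrt (by positivity)
  rw [div_mul_div_comm, div_mul_eq_mul_div, h0]
  congr 1
  have hpow : ρ^(j+1) * ρ^j = ρ * (ρ^2)^j := by
    rw [← pow_add, show j+1+j = 2*j+1 by omega, pow_succ, pow_mul]
    ring
  calc Real.sqrt (N.choose (j+1)) * ρ ^ (j+1) * (Real.sqrt (N.choose j) * ρ ^ j) *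
        Real.sqrt (((j:ℝ)+1) * ((N:ℝ)-(j:ℝ)))
      = (Real.sqrt (N.choose (j+1)) * Real.sqrt (N.choose j) *
          Real.sqrt (((j:ℝ)+1) * ((N:ℝ)-(j:ℝ)))) * (ρ^(j+1) * ρ^j) := by ring
    _ = (N.choose j : ℝ) * ((N:ℝ)-(j:ℝ)) * ρ * (ρ^2) ^ j / 1 * 1 := by
        rw [hkey, hpow]; ring
    _ = _ := by ring

/-- phase cross terms -/
lemma conj_exp_cross (δ : ℝ) (j : ℕ) :
    (starRingEnd ℂ) (Complex.exp (Complex.I * δ * (j+1:ℕ))) * Complex.exp (Complex.I * δ * j)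
      = Complex.exp (-(Complex.I * δ)) := by
  rw [← Complex.exp_conj, ← Complex.exp_add]
  congr 1
  have : (starRingEnd ℂ) (Complex.I * δ * (j+1:ℕ)) = -(Complex.I * δ * (j+1:ℕ)) := by
    simp [map_mul, Complex.conj_I, Complex.conj_ofReal]
  rw [this]
  push_cast
  ring

lemma exp_cross_conj (δ : ℝ) (j : ℕ) :
    (starRingEnd ℂ) (Complex.exp (Complex.I * δ * j)) * Complex.exp (Complex.I * δ * (j+1:ℕ))
      = Complex.exp (Complex.I * δ) := by
  rw [← Complex.exp_conj, ← Complex.exp_add]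
  congr 1
  have : (starRingEnd ℂ) (Complex.I * δ * (j:ℕ)) = -(Complex.I * δ * (j:ℕ)) := by
    simp [map_mul, Complex.conj_I, Complex.conj_ofReal]
  rw [this]
  push_cast
  ring

/- ============ expVal infrastructure ============ -/
lemma expVal_double (N : ℕ) (v : Fin (N+1) → ℂ) (A : Matrix (Fin (N+1)) (Fin (N+1)) ℂ) :
    expVal N v A = ∑ i : Fin (N+1), ∑ j : Fin (N+1), (starRingEnd ℂ) (v i) * (A i j * v j) := by
  unfold expVal
  simp only [dotProduct, Matrix.mulVec, Finset.mul_sum, Pi.star_apply,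
    Complex.star_def]

lemma double_fin_to_range (n : ℕ) (F : ℕ → ℕ → ℂ) :
    (∑ i : Fin n, ∑ j : Fin n, F ↑i ↑j) = ∑ i ∈ range n, ∑ j ∈ range n, F i j := by
  rw [← Fin.sum_univ_eq_sum_range (fun i => ∑ j ∈ range n, F i j) n]
  exact Finset.sum_congr rfl fun i _ => Fin.sum_univ_eq_sum_range (fun j => F ↑i j) n

lemma expVal_diag (N : ℕ) (v : Fin (N+1) → ℂ) (d : Fin (N+1) → ℂ) :
    expVal N v (Matrix.diagonal d) = ∑ i : Fin (N+1), (starRingEnd ℂ) (v i) * (d i * v i) := by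
  unfold expVal dotProduct
  exact Finset.sum_congr rfl fun i _ => by rw [Matrix.mulVec_diagonal]; rfl

lemma expVal_smul (N : ℕ) (v : Fin (N+1) → ℂ) (z : ℂ) (A : Matrix (Fin (N+1)) (Fin (N+1)) ℂ) :
    expVal N v (z • A) = z * expVal N v A := by
  unfold expVal
  rw [Matrix.smul_mulVec, dotProduct_smul, smul_eq_mul]

lemma expVal_add (N : ℕ) (v : Fin (N+1) → ℂ) (A B : Matrix (Fin (N+1)) (Fin (N+1)) ℂ) :
    expVal N v (A + B) = expVal N v A + expVal N v B := by
  unfold expVal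
  rw [Matrix.add_mulVec, dotProduct_add]

lemma expVal_sub (N : ℕ) (v : Fin (N+1) → ℂ) (A B : Matrix (Fin (N+1)) (Fin (N+1)) ℂ) :
    expVal N v (A - B) = expVal N v A - expVal N v B := by
  unfold expVal
  rw [Matrix.sub_mulVec, dotProduct_sub]

lemma s_ne (ρ : ℝ) : (1+(ρ:ℂ)^2) ≠ 0 := by
  intro h
  have h1 : ((1+ρ^2 : ℝ) : ℂ) = 0 := by push_cast; linear_combination h
  have h2 : (1+ρ^2 : ℝ) = 0 := by exact_mod_cast h1
  nlinarith [sq_nonneg ρ]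

lemma E3sum (N : ℕ) (ρ δ : ℝ) :
    expVal N (coh N ρ δ) (J3 N)
      = ((N:ℂ) * ((ρ:ℂ)^2) * (1+(ρ:ℂ)^2)^(N-1) - (N:ℂ)/2 * (1+(ρ:ℂ)^2)^N)
          / (1+(ρ:ℂ)^2)^N := by
  rw [show J3 N = Matrix.diagonal (fun k : Fin (N+1) => ((k : ℕ) : ℂ) - (N : ℂ) / 2) from rfl,
    expVal_diag, coh_eq]
  rw [Fin.sum_univ_eq_sum_range
    (fun k : ℕ => (starRingEnd ℂ) (cc N ρ δ k) * ((((k:ℕ):ℂ) - (N:ℂ)/2) * cc N ρ δ k)) (N+1)]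
  rw [Finset.sum_congr rfl fun k _ => conj_cc_mul N ρ δ k (((k:ℕ):ℂ) - (N:ℂ)/2)]
  have step : ∀ k ∈ range (N+1),
      (((N.choose k : ℝ) * (ρ^2) ^ k / (1 + ρ ^ 2) ^ N : ℝ) : ℂ) * (((k:ℕ):ℂ) - (N:ℂ)/2)
      = ((k:ℂ) * (N.choose k : ℂ) * ((ρ:ℂ)^2)^k - (N:ℂ)/2 * ((N.choose k : ℂ) * ((ρ:ℂ)^2)^k))
          / (1+(ρ:ℂ)^2)^N := by
    intro k _
    push_cast
    ring
  rw [Finset.sum_congr rfl step, ← Finset.sum_div, Finset.sum_sub_distrib, ← Finset.mul_sum,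
    sumA, sumB]

lemma E33sum (N : ℕ) (ρ δ : ℝ) :
    expVal N (coh N ρ δ) ((J3 N)^2)
      = ((N:ℂ) * ((N:ℂ)-1) * ((ρ:ℂ)^2)^2 * (1+(ρ:ℂ)^2)^(N-2)
          + (1-(N:ℂ)) * ((N:ℂ) * ((ρ:ℂ)^2) * (1+(ρ:ℂ)^2)^(N-1))
          + (N:ℂ)^2/4 * (1+(ρ:ℂ)^2)^N) / (1+(ρ:ℂ)^2)^N := by
  have hJ : (J3 N)^2 = Matrix.diagonal
      (fun k : Fin (N+1) => (((k : ℕ) : ℂ) - (N : ℂ) / 2) * (((k : ℕ) : ℂ) - (N : ℂ) / 2)) := by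
    rw [show (J3 N)^2 = J3 N * J3 N from sq (J3 N), J3, Matrix.diagonal_mul_diagonal]
  rw [hJ, expVal_diag, coh_eq]
  rw [Fin.sum_univ_eq_sum_range
    (fun k : ℕ => (starRingEnd ℂ) (cc N ρ δ k) *
      (((((k:ℕ):ℂ) - (N:ℂ)/2) * ((((k:ℕ):ℂ) - (N:ℂ)/2))) * cc N ρ δ k)) (N+1)]
  rw [Finset.sum_congr rfl fun k _ =>
    conj_cc_mul N ρ δ k ((((k:ℕ):ℂ) - (N:ℂ)/2) * (((k:ℕ):ℂ) - (N:ℂ)/2))]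
  have step : ∀ k ∈ range (N+1),
      (((N.choose k : ℝ) * (ρ^2) ^ k / (1 + ρ ^ 2) ^ N : ℝ) : ℂ) *
        ((((k:ℕ):ℂ) - (N:ℂ)/2) * (((k:ℕ):ℂ) - (N:ℂ)/2))
      = ((k:ℂ) * ((k:ℂ)-1) * (N.choose k : ℂ) * ((ρ:ℂ)^2)^k
          + (1-(N:ℂ)) * ((k:ℂ) * (N.choose k : ℂ) * ((ρ:ℂ)^2)^k)
          + (N:ℂ)^2/4 * ((N.choose k : ℂ) * ((ρ:ℂ)^2)^k))
          / (1+(ρ:ℂ)^2)^N := by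
    intro k _
    push_cast
    ring
  rw [Finset.sum_congr rfl step, ← Finset.sum_div, Finset.sum_add_distrib, Finset.sum_add_distrib,
    ← Finset.mul_sum, ← Finset.mul_sum, sumA, sumB, sumC]

lemma E3val (N : ℕ) (hN : 0 < N) (ρ δ : ℝ) :
    expVal N (coh N ρ δ) (J3 N)
      = ((N:ℂ) * (ρ:ℂ)^2 * 2 - (N:ℂ) * (1+(ρ:ℂ)^2)) / (2 * (1+(ρ:ℂ)^2)) := by
  obtain ⟨M, rfl⟩ : ∃ M, N = M + 1 := ⟨N-1, by omega⟩
  rw [E3sum]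
  simp only [Nat.add_sub_cancel]
  have hs := s_ne ρ
  rw [show (1+(ρ:ℂ)^2)^(M+1) = (1+(ρ:ℂ)^2)^M * (1+(ρ:ℂ)^2) from pow_succ _ _]
  have hsp : (1+(ρ:ℂ)^2)^M ≠ 0 := pow_ne_zero _ hs
  rw [div_eq_div_iff (mul_ne_zero hsp hs) (by exact mul_ne_zero two_ne_zero hs)]
  ring

lemma E33val (N : ℕ) (hN : 0 < N) (ρ δ : ℝ) :
    expVal N (coh N ρ δ) ((J3 N)^2)
      = ((N:ℂ) * ((N:ℂ)-1) * ((ρ:ℂ)^2)^2 * 4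
          + (1-(N:ℂ)) * (N:ℂ) * (ρ:ℂ)^2 * (4 * (1+(ρ:ℂ)^2))
          + (N:ℂ)^2 * ((1+(ρ:ℂ)^2) * (1+(ρ:ℂ)^2)))
        / (4 * ((1+(ρ:ℂ)^2) * (1+(ρ:ℂ)^2))) := by
  have hs := s_ne ρ
  have h4 : (4 : ℂ) * ((1+(ρ:ℂ)^2) * (1+(ρ:ℂ)^2)) ≠ 0 := by
    exact mul_ne_zero (by norm_num) (mul_ne_zero hs hs)
  rw [E33sum]
  rcases N with _ | N1
  · exact absurd hN (by omega)
  rcases N1 with _ | N2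
  · norm_num
    rw [div_eq_div_iff (by simpa using hs) h4]
    push_cast
    ring
  · simp only [show N2+1+1-1 = N2+1 from rfl, show N2+1+1-2 = N2 from rfl]
    rw [show (1+(ρ:ℂ)^2)^(N2+1+1) = (1+(ρ:ℂ)^2)^N2 * ((1+(ρ:ℂ)^2) * (1+(ρ:ℂ)^2)) from by
      rw [pow_add ((1:ℂ)+(ρ:ℂ)^2) N2 2]; ring,
      show (1+(ρ:ℂ)^2)^(N2+1) = (1+(ρ:ℂ)^2)^N2 * (1+(ρ:ℂ)^2) from
        pow_succ ((1:ℂ)+(ρ:ℂ)^2) N2]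
    have hsp : (1+(ρ:ℂ)^2)^N2 ≠ 0 := pow_ne_zero _ hs
    rw [div_eq_div_iff (mul_ne_zero hsp (mul_ne_zero hs hs)) h4]
    push_cast
    ring

lemma conj_cc_crossP (N : ℕ) (ρ δ : ℝ) (j : ℕ) (hj : j < N) :
    (starRingEnd ℂ) (cc N ρ δ (j+1)) *
      (((Real.sqrt (((j:ℝ)+1) * ((N:ℝ)-(j:ℝ))) : ℝ) : ℂ) * cc N ρ δ j)
      = (((N.choose j : ℝ) * ((N:ℝ)-(j:ℝ)) * ρ * (ρ^2) ^ j / (1 + ρ ^ 2) ^ N : ℝ) : ℂ)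
          * Complex.exp (-(Complex.I * δ)) := by
  unfold cc
  rw [map_mul, Complex.conj_ofReal]
  calc ((Real.sqrt (N.choose (j+1)) * ρ ^ (j+1) / Real.sqrt ((1 + ρ ^ 2) ^ N) : ℝ) : ℂ) *
        (starRingEnd ℂ) (Complex.exp (Complex.I * δ * (j+1:ℕ))) *
        (((Real.sqrt (((j:ℝ)+1) * ((N:ℝ)-(j:ℝ))) : ℝ) : ℂ) *
          (((Real.sqrt (N.choose j) * ρ ^ j / Real.sqrt ((1 + ρ ^ 2) ^ N) : ℝ) : ℂ) *
            Complex.exp (Complex.I * δ * (j:ℕ))))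
      = (((Real.sqrt (N.choose (j+1)) * ρ ^ (j+1) / Real.sqrt ((1 + ρ ^ 2) ^ N)) *
          (Real.sqrt (N.choose j) * ρ ^ j / Real.sqrt ((1 + ρ ^ 2) ^ N)) *
          Real.sqrt (((j:ℝ)+1) * ((N:ℝ)-(j:ℝ))) : ℝ) : ℂ) *
          ((starRingEnd ℂ) (Complex.exp (Complex.I * δ * (j+1:ℕ))) *
            Complex.exp (Complex.I * δ * (j:ℕ))) := by
        push_cast
        ring
    _ = _ := by rw [ampcross N j ρ hj, conj_exp_cross δ j]

lemma conj_cc_crossM (N : ℕ) (ρ δ : ℝ) (j : ℕ) (hj : j < N) :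
    (starRingEnd ℂ) (cc N ρ δ j) *
      (((Real.sqrt ((((j+1:ℕ)):ℝ) * ((N:ℝ)-(((j+1:ℕ)):ℝ)+1)) : ℝ) : ℂ) * cc N ρ δ (j+1))
      = (((N.choose j : ℝ) * ((N:ℝ)-(j:ℝ)) * ρ * (ρ^2) ^ j / (1 + ρ ^ 2) ^ N : ℝ) : ℂ)
          * Complex.exp (Complex.I * δ) := by
  have harg : ((((j+1:ℕ)):ℝ) * ((N:ℝ)-(((j+1:ℕ)):ℝ)+1)) = ((j:ℝ)+1) * ((N:ℝ)-(j:ℝ)) := by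
    push_cast
    ring
  rw [harg]
  unfold cc
  rw [map_mul, Complex.conj_ofReal]
  calc ((Real.sqrt (N.choose j) * ρ ^ j / Real.sqrt ((1 + ρ ^ 2) ^ N) : ℝ) : ℂ) *
        (starRingEnd ℂ) (Complex.exp (Complex.I * δ * (j:ℕ))) *
        (((Real.sqrt (((j:ℝ)+1) * ((N:ℝ)-(j:ℝ))) : ℝ) : ℂ) *
          (((Real.sqrt (N.choose (j+1)) * ρ ^ (j+1) / Real.sqrt ((1 + ρ ^ 2) ^ N) : ℝ) : ℂ) *
            Complex.exp (Complex.I * δ * (j+1:ℕ))))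
      = (((Real.sqrt (N.choose (j+1)) * ρ ^ (j+1) / Real.sqrt ((1 + ρ ^ 2) ^ N)) *
          (Real.sqrt (N.choose j) * ρ ^ j / Real.sqrt ((1 + ρ ^ 2) ^ N)) *
          Real.sqrt (((j:ℝ)+1) * ((N:ℝ)-(j:ℝ))) : ℝ) : ℂ) *
          ((starRingEnd ℂ) (Complex.exp (Complex.I * δ * (j:ℕ))) *
            Complex.exp (Complex.I * δ * (j+1:ℕ))) := by
        push_cast
        ring
    _ = _ := by rw [ampcross N j ρ hj, exp_cross_conj δ j]

lemma Epsum (N : ℕ) (ρ δ : ℝ) :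
    expVal N (coh N ρ δ) (Jp N)
      = (Complex.exp (-(Complex.I * δ)) * (ρ:ℂ) *
          ((N:ℂ) * (1+(ρ:ℂ)^2)^N - (N:ℂ) * (ρ:ℂ)^2 * (1+(ρ:ℂ)^2)^(N-1)))
        / (1+(ρ:ℂ)^2)^N := by
  rw [expVal_double]
  simp only [coh_eq]
  rw [show (∑ i : Fin (N+1), ∑ j : Fin (N+1),
        (starRingEnd ℂ) (cc N ρ δ ↑i) * (Jp N i j * cc N ρ δ ↑j))
      = ∑ i ∈ range (N+1), ∑ j ∈ range (N+1),
        (starRingEnd ℂ) (cc N ρ δ i) *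
          ((if i = j+1 then ((Real.sqrt (((j:ℝ)+1) * ((N:ℝ)-(j:ℝ))) : ℝ) : ℂ) else 0) *
            cc N ρ δ j)
    from double_fin_to_range (N+1) fun i j =>
      (starRingEnd ℂ) (cc N ρ δ i) *
        ((if i = j+1 then ((Real.sqrt (((j:ℝ)+1) * ((N:ℝ)-(j:ℝ))) : ℝ) : ℂ) else 0) *
          cc N ρ δ j)]
  rw [Finset.sum_comm]
  have inner : ∀ j ∈ range (N+1),
      (∑ i ∈ range (N+1), (starRingEnd ℂ) (cc N ρ δ i) *
        ((if i = j+1 then ((Real.sqrt (((j:ℝ)+1) * ((N:ℝ)-(j:ℝ))) : ℝ) : ℂ) else 0) *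
          cc N ρ δ j))
      = if j+1 ∈ range (N+1) then
          (starRingEnd ℂ) (cc N ρ δ (j+1)) *
            (((Real.sqrt (((j:ℝ)+1) * ((N:ℝ)-(j:ℝ))) : ℝ) : ℂ) * cc N ρ δ j) else 0 := by
    intro j _
    refine (Finset.sum_congr rfl fun i _ => ?_).trans
      (Finset.sum_ite_eq' (range (N+1)) (j+1)
        (fun i => (starRingEnd ℂ) (cc N ρ δ i) *
          (((Real.sqrt (((j:ℝ)+1) * ((N:ℝ)-(j:ℝ))) : ℝ) : ℂ) * cc N ρ δ j)))
    by_cases h : i = j+1 <;> simp [h]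
  rw [Finset.sum_congr rfl inner, Finset.sum_range_succ, if_neg (by simp), add_zero]
  rw [Finset.sum_congr rfl fun j hj =>
    (if_pos (Finset.mem_range.mpr (Nat.succ_lt_succ (Finset.mem_range.mp hj)))).trans
      (conj_cc_crossP N ρ δ j (Finset.mem_range.mp hj))]
  rw [← Finset.sum_mul]
  have ext : (∑ j ∈ range N,
        (((N.choose j : ℝ) * ((N:ℝ)-(j:ℝ)) * ρ * (ρ^2) ^ j / (1 + ρ ^ 2) ^ N : ℝ) : ℂ))
      = ∑ j ∈ range (N+1),
        (((N.choose j : ℝ) * ((N:ℝ)-(j:ℝ)) * ρ * (ρ^2) ^ j / (1 + ρ ^ 2) ^ N : ℝ) : ℂ) := by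
    rw [Finset.sum_range_succ, sub_self]
    norm_num
  rw [ext]
  have step : ∀ j ∈ range (N+1),
      (((N.choose j : ℝ) * ((N:ℝ)-(j:ℝ)) * ρ * (ρ^2) ^ j / (1 + ρ ^ 2) ^ N : ℝ) : ℂ)
      = ((N:ℂ) * ((N.choose j:ℂ) * ((ρ:ℂ)^2)^j) - (j:ℂ) * (N.choose j:ℂ) * ((ρ:ℂ)^2)^j)
          * ((ρ:ℂ) / (1+(ρ:ℂ)^2)^N) := by
    intro j _
    push_cast
    ring
  rw [Finset.sum_congr rfl step, ← Finset.sum_mul, Finset.sum_sub_distrib, ← Finset.mul_sum,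
    sumA, sumB]
  ring

lemma Emsum (N : ℕ) (ρ δ : ℝ) :
    expVal N (coh N ρ δ) (Jm N)
      = (Complex.exp (Complex.I * δ) * (ρ:ℂ) *
          ((N:ℂ) * (1+(ρ:ℂ)^2)^N - (N:ℂ) * (ρ:ℂ)^2 * (1+(ρ:ℂ)^2)^(N-1)))
        / (1+(ρ:ℂ)^2)^N := by
  rw [expVal_double]
  simp only [coh_eq]
  rw [show (∑ i : Fin (N+1), ∑ j : Fin (N+1),
        (starRingEnd ℂ) (cc N ρ δ ↑i) * (Jm N i j * cc N ρ δ ↑j))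
      = ∑ i ∈ range (N+1), ∑ j ∈ range (N+1),
        (starRingEnd ℂ) (cc N ρ δ i) *
          ((if i+1 = j then ((Real.sqrt ((j:ℝ) * ((N:ℝ)-(j:ℝ)+1)) : ℝ) : ℂ) else 0) *
            cc N ρ δ j)
    from double_fin_to_range (N+1) fun i j =>
      (starRingEnd ℂ) (cc N ρ δ i) *
        ((if i+1 = j then ((Real.sqrt ((j:ℝ) * ((N:ℝ)-(j:ℝ)+1)) : ℝ) : ℂ) else 0) *
          cc N ρ δ j)]
  have inner : ∀ i ∈ range (N+1),
      (∑ j ∈ range (N+1), (starRingEnd ℂ) (cc N ρ δ i) *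
        ((if i+1 = j then ((Real.sqrt ((j:ℝ) * ((N:ℝ)-(j:ℝ)+1)) : ℝ) : ℂ) else 0) *
          cc N ρ δ j))
      = if i+1 ∈ range (N+1) then
          (starRingEnd ℂ) (cc N ρ δ i) *
            (((Real.sqrt ((((i+1:ℕ)):ℝ) * ((N:ℝ)-(((i+1:ℕ)):ℝ)+1)) : ℝ) : ℂ) *
              cc N ρ δ (i+1)) else 0 := by
    intro i _
    refine (Finset.sum_congr rfl fun j _ => ?_).trans
      (Finset.sum_ite_eq (range (N+1)) (i+1)
        (fun j => (starRingEnd ℂ) (cc N ρ δ i) *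
          (((Real.sqrt ((j:ℝ) * ((N:ℝ)-(j:ℝ)+1)) : ℝ) : ℂ) * cc N ρ δ j)))
    by_cases h : i+1 = j <;> simp [h]
  rw [Finset.sum_congr rfl inner, Finset.sum_range_succ, if_neg (by simp), add_zero]
  rw [Finset.sum_congr rfl fun i hi =>
    (if_pos (Finset.mem_range.mpr (Nat.succ_lt_succ (Finset.mem_range.mp hi)))).trans
      (conj_cc_crossM N ρ δ i (Finset.mem_range.mp hi))]
  rw [← Finset.sum_mul]
  have ext : (∑ j ∈ range N,
        (((N.choose j : ℝ) * ((N:ℝ)-(j:ℝ)) * ρ * (ρ^2) ^ j / (1 + ρ ^ 2) ^ N : ℝ) : ℂ))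
      = ∑ j ∈ range (N+1),
        (((N.choose j : ℝ) * ((N:ℝ)-(j:ℝ)) * ρ * (ρ^2) ^ j / (1 + ρ ^ 2) ^ N : ℝ) : ℂ) := by
    rw [Finset.sum_range_succ, sub_self]
    norm_num
  rw [ext]
  have step : ∀ j ∈ range (N+1),
      (((N.choose j : ℝ) * ((N:ℝ)-(j:ℝ)) * ρ * (ρ^2) ^ j / (1 + ρ ^ 2) ^ N : ℝ) : ℂ)
      = ((N:ℂ) * ((N.choose j:ℂ) * ((ρ:ℂ)^2)^j) - (j:ℂ) * (N.choose j:ℂ) * ((ρ:ℂ)^2)^j)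
          * ((ρ:ℂ) / (1+(ρ:ℂ)^2)^N) := by
    intro j _
    push_cast
    ring
  rw [Finset.sum_congr rfl step, ← Finset.sum_mul, Finset.sum_sub_distrib, ← Finset.mul_sum,
    sumA, sumB]
  ring

lemma Epval (N : ℕ) (hN : 0 < N) (ρ δ : ℝ) :
    expVal N (coh N ρ δ) (Jp N)
      = Complex.exp (-(Complex.I * δ)) * (ρ:ℂ) * (N:ℂ) / (1+(ρ:ℂ)^2) := by
  obtain ⟨M, rfl⟩ : ∃ M, N = M + 1 := ⟨N-1, by omega⟩
  rw [Epsum]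
  simp only [Nat.add_sub_cancel]
  rw [show (1+(ρ:ℂ)^2)^(M+1) = (1+(ρ:ℂ)^2)^M * (1+(ρ:ℂ)^2) from pow_succ _ _]
  have hs := s_ne ρ
  have hsp : (1+(ρ:ℂ)^2)^M ≠ 0 := pow_ne_zero _ hs
  rw [div_eq_div_iff (mul_ne_zero hsp hs) hs]
  ring

lemma Emval (N : ℕ) (hN : 0 < N) (ρ δ : ℝ) :
    expVal N (coh N ρ δ) (Jm N)
      = Complex.exp (Complex.I * δ) * (ρ:ℂ) * (N:ℂ) / (1+(ρ:ℂ)^2) := by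
  obtain ⟨M, rfl⟩ : ∃ M, N = M + 1 := ⟨N-1, by omega⟩
  rw [Emsum]
  simp only [Nat.add_sub_cancel]
  rw [show (1+(ρ:ℂ)^2)^(M+1) = (1+(ρ:ℂ)^2)^M * (1+(ρ:ℂ)^2) from pow_succ _ _]
  have hs := s_ne ρ
  have hsp : (1+(ρ:ℂ)^2)^M ≠ 0 := pow_ne_zero _ hs
  rw [div_eq_div_iff (mul_ne_zero hsp hs) hs]
  ring

lemma alg (a b : ℂ) : (1/2*(a+b))^2 + (1/(2*Complex.I)*(a-b))^2 = a*b := by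
  have h := Complex.I_sq
  have hI : Complex.I ≠ 0 := Complex.I_ne_zero
  field_simp
  linear_combination (a-b)^2 * h

/-- The squeezing parameter `Z₃² = N (ΔJ3)² / (⟨J1⟩² + ⟨J2⟩²)` equals `1` in every
su(2) coherent state with `η ≠ 0`: coherent states are never squeezed along `J3`. -/
theorem coherent_not_squeezed (N : ℕ) (hN : 0 < N) (ρ δ : ℝ) (hρ : 0 < ρ) :
    (N : ℂ) *
        (expVal N (coh N ρ δ) ((J3 N) ^ 2) - (expVal N (coh N ρ δ) (J3 N)) ^ 2) /
        ((expVal N (coh N ρ δ) ((1 / 2 : ℂ) • (Jp N + Jm N))) ^ 2 +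
          (expVal N (coh N ρ δ) ((1 / (2 * Complex.I)) • (Jp N - Jm N))) ^ 2) = 1 := by
  have hs := s_ne ρ
  have hNc : (N:ℂ) ≠ 0 := Nat.cast_ne_zero.mpr hN.ne'
  have hρc : (ρ:ℂ) ≠ 0 := Complex.ofReal_ne_zero.mpr hρ.ne'
  have key : (expVal N (coh N ρ δ) ((1 / 2 : ℂ) • (Jp N + Jm N))) ^ 2 +
      (expVal N (coh N ρ δ) ((1 / (2 * Complex.I)) • (Jp N - Jm N))) ^ 2
      = (ρ:ℂ)^2 * (N:ℂ)^2 / ((1+(ρ:ℂ)^2) * (1+(ρ:ℂ)^2)) := by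
    rw [expVal_smul, expVal_add, expVal_smul, expVal_sub, Epval N hN ρ δ, Emval N hN ρ δ, alg,
      Complex.exp_neg]
    have hg : Complex.exp (Complex.I * δ) ≠ 0 := Complex.exp_ne_zero _
    field_simp
  have num : (N : ℂ) *
      (expVal N (coh N ρ δ) ((J3 N) ^ 2) - (expVal N (coh N ρ δ) (J3 N)) ^ 2)
      = (ρ:ℂ)^2 * (N:ℂ)^2 / ((1+(ρ:ℂ)^2) * (1+(ρ:ℂ)^2)) := by
    rw [E33val N hN ρ δ, E3val N hN ρ δ]
    field_simp
    ring
  rw [num, key, div_self]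
  exact div_ne_zero (mul_ne_zero (pow_ne_zero 2 hρc) (pow_ne_zero 2 hNc)) (mul_ne_zero hs hs)
end
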